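/- arXiv:2112.09655 — 3 statements merged into one kernel-verified Lean document; each statement's English description precedes it below -/
import Mathlib

section
/- Let r : S → ℝ and r̄ : S̄ → ℝ be bounded measurable reward functions, let K̄ ≥ 0, and let L_R = ∫ |r(s) − r̄(φ(s))| dξ(s). Assume that (i) for every s ∈ S, d(inl s, inr φ(s)) ≤ (1−γ)|r(s) − r̄(φ(s))| + γ · W_d(κ(inl s), κ(inr φ(s))), (ii) d(inr x̄, inr ȳ) ≤ K̄ for all x̄, ȳ ∈ S̄, and (iii) singletons of S are measurable. If s₁, s₂ ∈ S satisfy φ(s₁) = φ(s₂), ξ({s₁}) > 0 and ξ({s₂}) > 0, then d(inl s₁, inl s₂) ≤ (L_R + γ K̄ L_P/(1−γ)) · (ξ({s₁})⁻¹ + ξ({s₂})⁻¹). -/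
open MeasureTheory ProbabilityTheory

/-- Total variation distance between two measures on `X`:
the supremum over measurable sets of the absolute difference of their masses. -/
noncomputable def tvDist {X : Type*} [MeasurableSpace X] (μ ν : Measure X) : ℝ :=
  ⨆ A : {A : Set X // MeasurableSet A}, |(μ A.1).toReal - (ν A.1).toReal|

/-- Dual (Kantorovich) Wasserstein distance between two measures with respect to a cost
function `d`: the supremum over bounded measurable `d`-Lipschitz functions of the absolute
difference of their integrals. -/
noncomputable def wassDual {X : Type*} [MeasurableSpace X] (d : X → X → ℝ)
    (μ ν : Measure X) : ℝ :=
  ⨆ f : {f : X → ℝ // Measurable f ∧ (∃ C, ∀ x, |f x| ≤ C) ∧ ∀ x y, |f x - f y| ≤ d x y},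
    |(∫ x, f.1 x ∂μ) - ∫ x, f.1 x ∂ν|

lemma aux_integrable {α : Type*} [MeasurableSpace α] {μ : Measure α} [IsFiniteMeasure μ]
    {f : α → ℝ} (hm : AEStronglyMeasurable f μ) {C : ℝ} (h : ∀ x, |f x| ≤ C) :
    Integrable f μ :=
  ⟨hm, HasFiniteIntegral.of_bounded (C := C)
    (ae_of_all _ fun x => by simpa [Real.norm_eq_abs] using h x)⟩

lemma prob_toReal_le_one {X : Type*} [MeasurableSpace X] (μ : Measure X)
    [IsProbabilityMeasure μ] (A : Set X) : (μ A).toReal ≤ 1 := by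
  have h := ENNReal.toReal_mono (by simp) (prob_le_one (μ := μ) (s := A))
  simpa using h

lemma tv_term_le_one {X : Type*} [MeasurableSpace X] (μ ν : Measure X)
    [IsProbabilityMeasure μ] [IsProbabilityMeasure ν] (A : Set X) :
    |(μ A).toReal - (ν A).toReal| ≤ 1 := by
  have h1 := prob_toReal_le_one μ A
  have h2 := prob_toReal_le_one ν A
  have h3 : (0:ℝ) ≤ (μ A).toReal := ENNReal.toReal_nonneg
  have h4 : (0:ℝ) ≤ (ν A).toReal := ENNReal.toReal_nonneg
  rw [abs_le]; constructor <;> linarith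

lemma tvDist_bddAbove {X : Type*} [MeasurableSpace X] (μ ν : Measure X)
    [IsProbabilityMeasure μ] [IsProbabilityMeasure ν] :
    BddAbove (Set.range fun A : {A : Set X // MeasurableSet A} =>
      |(μ A.1).toReal - (ν A.1).toReal|) := by
  refine ⟨1, ?_⟩
  rintro x ⟨A, rfl⟩
  exact tv_term_le_one μ ν A.1

lemma abs_le_tvDist {X : Type*} [MeasurableSpace X] (μ ν : Measure X)
    [IsProbabilityMeasure μ] [IsProbabilityMeasure ν] {A : Set X} (hA : MeasurableSet A) :
    |(μ A).toReal - (ν A).toReal| ≤ tvDist μ ν :=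
  le_ciSup (tvDist_bddAbove μ ν) ⟨A, hA⟩

lemma tvDist_nonneg {X : Type*} [MeasurableSpace X] (μ ν : Measure X)
    [IsProbabilityMeasure μ] [IsProbabilityMeasure ν] : 0 ≤ tvDist μ ν :=
  le_trans (abs_nonneg _) (abs_le_tvDist μ ν MeasurableSet.empty)

lemma tvDist_le_one {X : Type*} [MeasurableSpace X] (μ ν : Measure X)
    [IsProbabilityMeasure μ] [IsProbabilityMeasure ν] : tvDist μ ν ≤ 1 :=
  ciSup_le fun A => tv_term_le_one μ ν A.1

lemma measure_coe_finset_toReal {Sb : Type*} [MeasurableSpace Sb] [MeasurableSingletonClass Sb]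
    (μ : Measure Sb) [IsFiniteMeasure μ] (A : Finset Sb) :
    (μ (A : Set Sb)).toReal = ∑ x ∈ A, (μ {x}).toReal := by
  rw [← ENNReal.toReal_sum (fun a _ => measure_ne_top μ _)]
  congr 1
  rw [show (A : Set Sb) = ⋃ x ∈ A, {x} by ext y; simp]
  rw [measure_biUnion_finset ?_ (fun b _ => measurableSet_singleton b)]
  intro x _ y _ hxy
  simp [Function.onFun, Set.disjoint_singleton, hxy]

lemma abs_integral_sub_le_tvDist {Sb : Type*} [Fintype Sb] [Nonempty Sb] [MeasurableSpace Sb]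
    [DiscreteMeasurableSpace Sb] (μ ν : Measure Sb) [IsProbabilityMeasure μ]
    [IsProbabilityMeasure ν] (h : Sb → ℝ) {K : ℝ} (hK : ∀ x y, |h x - h y| ≤ K) :
    |(∫ x, h x ∂μ) - ∫ x, h x ∂ν| ≤ K * tvDist μ ν := by
  classical
  obtain ⟨x₀, -, hx₀⟩ := Finset.exists_min_image Finset.univ h Finset.univ_nonempty
  have hK0 : 0 ≤ K := le_trans (abs_nonneg _) (hK x₀ x₀)
  have hbd : ∀ x, |h x| ≤ |h x₀| + K := by
    intro x
    have h1 : h x = (h x - h x₀) + h x₀ := by ring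
    calc |h x| = |(h x - h x₀) + h x₀| := by rw [← h1]
      _ ≤ |h x - h x₀| + |h x₀| := abs_add_le _ _
      _ ≤ K + |h x₀| := add_le_add_left (hK x x₀) _
      _ = |h x₀| + K := by ring
  have hint : ∀ (θ : Measure Sb) [IsProbabilityMeasure θ], Integrable h θ := fun θ _ =>
    aux_integrable Measurable.of_discrete.aestronglyMeasurable hbd
  have hsum1 : ∀ (θ : Measure Sb) [IsProbabilityMeasure θ], ∑ x, (θ {x}).toReal = 1 := by
    intro θ _
    rw [← measure_coe_finset_toReal θ Finset.univ]
    simp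
  have hΔsum : ∑ x, ((μ {x}).toReal - (ν {x}).toReal) = 0 := by
    rw [Finset.sum_sub_distrib, hsum1 μ, hsum1 ν]; ring
  have ediff : (∫ x, h x ∂μ) - ∫ x, h x ∂ν
      = ∑ x, ((μ {x}).toReal - (ν {x}).toReal) * (h x - h x₀) := by
    rw [integral_fintype (hint μ), integral_fintype (hint ν)]
    simp only [Measure.real]
    have e : ∑ x, ((μ {x}).toReal - (ν {x}).toReal) * (h x - h x₀)
        = (∑ x, ((μ {x}).toReal • h x - (ν {x}).toReal • h x))
          - (∑ x, ((μ {x}).toReal - (ν {x}).toReal)) * h x₀ := by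
      rw [Finset.sum_mul, ← Finset.sum_sub_distrib]
      exact Finset.sum_congr rfl fun x _ => by simp [smul_eq_mul]; ring
    rw [e, hΔsum, zero_mul, sub_zero, Finset.sum_sub_distrib]
  have hh0 : ∀ x, 0 ≤ h x - h x₀ := fun x => sub_nonneg.2 (hx₀ x (Finset.mem_univ x))
  have hhK : ∀ x, h x - h x₀ ≤ K := fun x => (le_abs_self _).trans (hK x x₀)
  set A : Finset Sb := Finset.univ.filter (fun x => 0 ≤ (μ {x}).toReal - (ν {x}).toReal) with hA
  have hsplit := Finset.sum_filter_add_sum_filter_not Finset.univ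
    (fun x => 0 ≤ (μ {x}).toReal - (ν {x}).toReal)
    (fun x => ((μ {x}).toReal - (ν {x}).toReal) * (h x - h x₀))
  have hAsum : ∑ x ∈ A, ((μ {x}).toReal - (ν {x}).toReal)
      = (μ (A : Set Sb)).toReal - (ν (A : Set Sb)).toReal := by
    rw [measure_coe_finset_toReal, measure_coe_finset_toReal, Finset.sum_sub_distrib]
  set B : Finset Sb := Finset.univ.filter
    (fun x => ¬ 0 ≤ (μ {x}).toReal - (ν {x}).toReal) with hB
  have hBsum : ∑ x ∈ B, ((μ {x}).toReal - (ν {x}).toReal)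
      = (μ (B : Set Sb)).toReal - (ν (B : Set Sb)).toReal := by
    rw [measure_coe_finset_toReal, measure_coe_finset_toReal, Finset.sum_sub_distrib]
  have htvA := abs_le_tvDist μ ν (MeasurableSet.of_discrete (s := (A : Set Sb)))
  have htvB := abs_le_tvDist μ ν (MeasurableSet.of_discrete (s := (B : Set Sb)))
  have hupper : ∑ x, ((μ {x}).toReal - (ν {x}).toReal) * (h x - h x₀) ≤ K * tvDist μ ν := by
    have h1 : ∑ x ∈ B, ((μ {x}).toReal - (ν {x}).toReal) * (h x - h x₀) ≤ 0 :=
      Finset.sum_nonpos fun x hx => mul_nonpos_iff.mpr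
        (Or.inr ⟨le_of_not_ge (Finset.mem_filter.1 hx).2, hh0 x⟩)
    have h2 : ∑ x ∈ A, ((μ {x}).toReal - (ν {x}).toReal) * (h x - h x₀)
        ≤ (∑ x ∈ A, ((μ {x}).toReal - (ν {x}).toReal)) * K := by
      rw [Finset.sum_mul]
      exact Finset.sum_le_sum fun x hx =>
        mul_le_mul_of_nonneg_left (hhK x) (Finset.mem_filter.1 hx).2
    have h3 : (∑ x ∈ A, ((μ {x}).toReal - (ν {x}).toReal)) * K ≤ tvDist μ ν * K := by
      apply mul_le_mul_of_nonneg_right _ hK0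
      rw [hAsum]
      exact le_trans (le_abs_self _) htvA
    calc ∑ x, ((μ {x}).toReal - (ν {x}).toReal) * (h x - h x₀)
        = ∑ x ∈ A, ((μ {x}).toReal - (ν {x}).toReal) * (h x - h x₀)
          + ∑ x ∈ B, ((μ {x}).toReal - (ν {x}).toReal) * (h x - h x₀) := hsplit.symm
      _ ≤ (∑ x ∈ A, ((μ {x}).toReal - (ν {x}).toReal)) * K + 0 := add_le_add h2 h1
      _ ≤ tvDist μ ν * K + 0 := by linarith
      _ = K * tvDist μ ν := by ring
  have hlower : -(K * tvDist μ ν) ≤ ∑ x, ((μ {x}).toReal - (ν {x}).toReal) * (h x - h x₀) := by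
    have h1 : (0:ℝ) ≤ ∑ x ∈ A, ((μ {x}).toReal - (ν {x}).toReal) * (h x - h x₀) :=
      Finset.sum_nonneg fun x hx => mul_nonneg (Finset.mem_filter.1 hx).2 (hh0 x)
    have h2 : (∑ x ∈ B, ((μ {x}).toReal - (ν {x}).toReal)) * K
        ≤ ∑ x ∈ B, ((μ {x}).toReal - (ν {x}).toReal) * (h x - h x₀) := by
      rw [Finset.sum_mul]
      refine Finset.sum_le_sum fun x hx => ?_
      have hneg : (μ {x}).toReal - (ν {x}).toReal ≤ 0 :=
        le_of_not_ge (Finset.mem_filter.1 hx).2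
      nlinarith [hhK x, hh0 x]
    have h3 : -(K * tvDist μ ν) ≤ (∑ x ∈ B, ((μ {x}).toReal - (ν {x}).toReal)) * K := by
      rw [hBsum]
      have : -(tvDist μ ν) ≤ (μ (B : Set Sb)).toReal - (ν (B : Set Sb)).toReal := by
        have := neg_abs_le ((μ (B : Set Sb)).toReal - (ν (B : Set Sb)).toReal)
        linarith [htvB]
      nlinarith [tvDist_nonneg μ ν]
    calc -(K * tvDist μ ν) ≤ (∑ x ∈ B, ((μ {x}).toReal - (ν {x}).toReal)) * K := h3
      _ ≤ ∑ x ∈ B, ((μ {x}).toReal - (ν {x}).toReal) * (h x - h x₀) := h2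
      _ ≤ ∑ x ∈ A, ((μ {x}).toReal - (ν {x}).toReal) * (h x - h x₀)
          + ∑ x ∈ B, ((μ {x}).toReal - (ν {x}).toReal) * (h x - h x₀) := by linarith
      _ = ∑ x, ((μ {x}).toReal - (ν {x}).toReal) * (h x - h x₀) := hsplit
  rw [ediff, abs_le]
  exact ⟨hlower, hupper⟩

/-- Abstraction-quality bound for the reward-based bisimulation pseudometric: two states with
the same embedding and positive stationary mass are within bisimulation distance
`(L_R + γ·K̄·L_P/(1-γ))·(ξ{s₁}⁻¹ + ξ{s₂}⁻¹)` of each other. -/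
theorem bisimulation_closeness_rewards
    {S : Type*} [MeasurableSpace S] [MeasurableSingletonClass S]
    {Sb : Type*} [Fintype Sb] [Nonempty Sb] [MeasurableSpace Sb] [DiscreteMeasurableSpace Sb]
    (P : Kernel S S) [IsMarkovKernel P]
    (Pb : Sb → PMF Sb)
    (φ : S → Sb) (hφ : Measurable φ)
    (ξ : Measure S) [IsProbabilityMeasure ξ]
    (hinv : ∀ A : Set S, MeasurableSet A → ξ A = ∫⁻ s, P s A ∂ξ)
    (γ : ℝ) (hγ0 : 0 ≤ γ) (hγ1 : γ < 1)
    (d : (S ⊕ Sb) → (S ⊕ Sb) → ℝ)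
    (hdmeas : Measurable (Function.uncurry d))
    (hd01 : ∀ x y, d x y ∈ Set.Icc (0 : ℝ) 1)
    (hdrefl : ∀ x, d x x = 0)
    (hdsymm : ∀ x y, d x y = d y x)
    (hdtri : ∀ x y z, d x z ≤ d x y + d y z)
    (r : S → ℝ) (hrmeas : Measurable r) (hrbdd : ∃ C, ∀ s, |r s| ≤ C)
    (rb : Sb → ℝ)
    (Kb : ℝ) (hKb : 0 ≤ Kb)
    (hfix : ∀ s : S,
      d (Sum.inl s) (Sum.inr (φ s)) ≤
        (1 - γ) * |r s - rb (φ s)| +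
          γ * wassDual d (((P s).map Sum.inl : Measure (S ⊕ Sb)))
            (((Pb (φ s)).toMeasure.map Sum.inr : Measure (S ⊕ Sb))))
    (hdK : ∀ x y : Sb, d (Sum.inr x) (Sum.inr y) ≤ Kb)
    (s₁ s₂ : S) (hφeq : φ s₁ = φ s₂)
    (hs₁ : 0 < ξ {s₁}) (hs₂ : 0 < ξ {s₂}) :
    d (Sum.inl s₁) (Sum.inl s₂) ≤
      ((∫ s, |r s - rb (φ s)| ∂ξ) +
          γ * Kb * (∫ s, tvDist ((P s).map φ) ((Pb (φ s)).toMeasure) ∂ξ) / (1 - γ)) *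
        ((ξ {s₁}).toReal⁻¹ + (ξ {s₂}).toReal⁻¹) := by
  classical
  have h1γ : 0 < 1 - γ := by linarith
  have hgm : Measurable (fun s => d (Sum.inl s) (Sum.inr (φ s))) :=
    hdmeas.comp (measurable_inl.prodMk (measurable_inr.comp hφ))
  have hg0 : ∀ s, 0 ≤ d (Sum.inl s) (Sum.inr (φ s)) := fun s => (hd01 _ _).1
  have hg1 : ∀ s, d (Sum.inl s) (Sum.inr (φ s)) ≤ 1 := fun s => (hd01 _ _).2
  have hint_g : ∀ (θ : Measure S) [IsProbabilityMeasure θ],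
      Integrable (fun s => d (Sum.inl s) (Sum.inr (φ s))) θ := fun θ _ =>
    aux_integrable hgm.aestronglyMeasurable (C := 1)
      (fun s => abs_le.mpr ⟨by linarith [hg0 s], hg1 s⟩)
  haveI instmapφ : ∀ s, IsProbabilityMeasure ((P s).map φ) :=
    fun s => Measure.isProbabilityMeasure_map hφ.aemeasurable
  -- Wasserstein bound
  have hkey : ∀ s : S,
      wassDual d (((P s).map Sum.inl : Measure (S ⊕ Sb)))
          (((Pb (φ s)).toMeasure.map Sum.inr : Measure (S ⊕ Sb)))
        ≤ (∫ x, d (Sum.inl x) (Sum.inr (φ x)) ∂(P s))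
          + Kb * tvDist ((P s).map φ) ((Pb (φ s)).toMeasure) := by
    intro s
    haveI : Nonempty {f : (S ⊕ Sb) → ℝ // Measurable f ∧ (∃ C, ∀ x, |f x| ≤ C) ∧
        ∀ x y, |f x - f y| ≤ d x y} :=
      ⟨⟨fun _ => 0, measurable_const, ⟨0, fun x => by simp⟩,
        fun x y => by simpa using (hd01 x y).1⟩⟩
    apply ciSup_le
    rintro ⟨f, hfm, ⟨C, hfC⟩, hfl⟩
    have hint_f1 : Integrable (fun a => f (Sum.inl a)) (P s) :=
      aux_integrable (hfm.comp measurable_inl).aestronglyMeasurable (fun a => hfC _)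
    have hint_f2 : Integrable (fun a => f (Sum.inr (φ a))) (P s) :=
      aux_integrable (hfm.comp (measurable_inr.comp hφ)).aestronglyMeasurable (fun a => hfC _)
    simp only
    rw [integral_map measurable_inl.aemeasurable hfm.aestronglyMeasurable,
      integral_map measurable_inr.aemeasurable hfm.aestronglyMeasurable]
    have step1 : |(∫ a, f (Sum.inl a) ∂(P s)) - ∫ a, f (Sum.inr (φ a)) ∂(P s)|
        ≤ ∫ x, d (Sum.inl x) (Sum.inr (φ x)) ∂(P s) := by
      rw [← integral_sub hint_f1 hint_f2]
      calc |∫ a, (f (Sum.inl a) - f (Sum.inr (φ a))) ∂(P s)|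
          ≤ ∫ a, |f (Sum.inl a) - f (Sum.inr (φ a))| ∂(P s) :=
            by
              have hn := norm_integral_le_integral_norm
                (μ := P s) (fun a => f (Sum.inl a) - f (Sum.inr (φ a)))
              simpa [Real.norm_eq_abs] using hn
        _ ≤ ∫ x, d (Sum.inl x) (Sum.inr (φ x)) ∂(P s) :=
            integral_mono (hint_f1.sub hint_f2).abs (hint_g _) (fun a => hfl _ _)
    have step2 : |(∫ a, f (Sum.inr (φ a)) ∂(P s)) - ∫ b, f (Sum.inr b) ∂((Pb (φ s)).toMeasure)|
        ≤ Kb * tvDist ((P s).map φ) ((Pb (φ s)).toMeasure) := by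
      rw [show (∫ a, f (Sum.inr (φ a)) ∂(P s)) = ∫ b, f (Sum.inr b) ∂((P s).map φ) from
        (integral_map hφ.aemeasurable (f := fun b => f (Sum.inr b))
          Measurable.of_discrete.aestronglyMeasurable).symm]
      exact abs_integral_sub_le_tvDist _ _ _ (fun x y => (hfl _ _).trans (hdK x y))
    calc |(∫ a, f (Sum.inl a) ∂(P s)) - ∫ b, f (Sum.inr b) ∂((Pb (φ s)).toMeasure)|
        ≤ |(∫ a, f (Sum.inl a) ∂(P s)) - ∫ a, f (Sum.inr (φ a)) ∂(P s)|
          + |(∫ a, f (Sum.inr (φ a)) ∂(P s)) - ∫ b, f (Sum.inr b) ∂((Pb (φ s)).toMeasure)| :=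
          abs_sub_le _ _ _
      _ ≤ _ := add_le_add step1 step2
  -- pointwise inequality
  have hpt : ∀ s, d (Sum.inl s) (Sum.inr (φ s)) ≤ (1 - γ) * |r s - rb (φ s)|
      + γ * ((∫ x, d (Sum.inl x) (Sum.inr (φ x)) ∂(P s))
        + Kb * tvDist ((P s).map φ) ((Pb (φ s)).toMeasure)) := fun s =>
    (hfix s).trans (add_le_add_right (mul_le_mul_of_nonneg_left (hkey s) hγ0) _)
  -- measurability of the averaged distance
  have hgE : Measurable fun x => ENNReal.ofReal (d (Sum.inl x) (Sum.inr (φ x))) :=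
    ENNReal.measurable_ofReal.comp hgm
  have hIg_eq : ∀ s, (∫ x, d (Sum.inl x) (Sum.inr (φ x)) ∂(P s))
      = (∫⁻ x, ENNReal.ofReal (d (Sum.inl x) (Sum.inr (φ x))) ∂(P s)).toReal := fun s =>
    integral_eq_lintegral_of_nonneg_ae (ae_of_all _ hg0) hgm.aestronglyMeasurable
  have hIgm : Measurable (fun s => ∫ x, d (Sum.inl x) (Sum.inr (φ x)) ∂(P s)) := by
    rw [funext hIg_eq]
    exact (Measurable.lintegral_kernel hgE).ennreal_toReal
  have hIg0 : ∀ s, 0 ≤ ∫ x, d (Sum.inl x) (Sum.inr (φ x)) ∂(P s) := fun s =>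
    integral_nonneg hg0
  have hIg1 : ∀ s, (∫ x, d (Sum.inl x) (Sum.inr (φ x)) ∂(P s)) ≤ 1 := fun s => by
    calc (∫ x, d (Sum.inl x) (Sum.inr (φ x)) ∂(P s)) ≤ ∫ _, (1:ℝ) ∂(P s) :=
        integral_mono (hint_g _) (integrable_const 1) hg1
      _ = 1 := by simp
  -- t : measurability and bounds
  have ht0 : ∀ s, 0 ≤ tvDist ((P s).map φ) ((Pb (φ s)).toMeasure) := fun s =>
    tvDist_nonneg _ _
  have ht1 : ∀ s, tvDist ((P s).map φ) ((Pb (φ s)).toMeasure) ≤ 1 := fun s =>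
    tvDist_le_one _ _
  have htm : Measurable (fun s => tvDist ((P s).map φ) ((Pb (φ s)).toMeasure)) := by
    haveI : Fintype {A : Set Sb // MeasurableSet A} := Fintype.ofFinite _
    haveI : Nonempty {A : Set Sb // MeasurableSet A} := ⟨⟨∅, MeasurableSet.empty⟩⟩
    have hF : ∀ A : {A : Set Sb // MeasurableSet A}, Measurable (fun s =>
        |(((P s).map φ) A.1).toReal - (((Pb (φ s)).toMeasure) A.1).toReal|) := by
      intro A
      have h1 : Measurable fun s => (((P s).map φ) A.1).toReal := by
        have e : ∀ s, ((P s).map φ) A.1 = P s (φ ⁻¹' A.1) := fun s =>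
          Measure.map_apply hφ A.2
        simp_rw [e]
        exact (Kernel.measurable_coe P (hφ A.2)).ennreal_toReal
      have h2 : Measurable fun s => (((Pb (φ s)).toMeasure) A.1).toReal :=
        (Measurable.of_discrete (f := fun x : Sb => ((Pb x).toMeasure A.1).toReal)).comp hφ
      exact (h1.sub h2).abs
    have hmsup := Finset.measurable_sup' (s := (Finset.univ : Finset {A : Set Sb // MeasurableSet A}))
      Finset.univ_nonempty (fun A _ => hF A)
    have e : (fun s => tvDist ((P s).map φ) ((Pb (φ s)).toMeasure))
        = Finset.univ.sup' Finset.univ_nonempty (fun A : {A : Set Sb // MeasurableSet A} =>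
            fun s => |(((P s).map φ) A.1).toReal - (((Pb (φ s)).toMeasure) A.1).toReal|) := by
      funext s
      rw [Finset.sup'_apply, Finset.sup'_univ_eq_ciSup]
      rfl
    rw [e]
    exact hmsup
  -- integrability over ξ
  have hrbm : Measurable (fun s => |r s - rb (φ s)|) :=
    (hrmeas.sub (Measurable.of_discrete.comp hφ)).abs
  have hint_u : Integrable (fun s => |r s - rb (φ s)|) ξ := by
    obtain ⟨C, hC⟩ := hrbdd
    obtain ⟨x₁, -, hx₁⟩ := Finset.exists_max_image Finset.univ (fun x => |rb x|)
      Finset.univ_nonempty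
    refine aux_integrable hrbm.aestronglyMeasurable (C := C + |rb x₁|) fun s => ?_
    rw [abs_abs]
    calc |r s - rb (φ s)| = |r s + -(rb (φ s))| := by rw [sub_eq_add_neg]
      _ ≤ |r s| + |-(rb (φ s))| := abs_add_le _ _
      _ = |r s| + |rb (φ s)| := by rw [abs_neg]
      _ ≤ C + |rb x₁| := add_le_add (hC s) (hx₁ _ (Finset.mem_univ _))
  have hint_Ig : Integrable (fun s => ∫ x, d (Sum.inl x) (Sum.inr (φ x)) ∂(P s)) ξ :=
    aux_integrable hIgm.aestronglyMeasurable (C := 1)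
      (fun s => abs_le.mpr ⟨by linarith [hIg0 s], hIg1 s⟩)
  have hint_t : Integrable (fun s => tvDist ((P s).map φ) ((Pb (φ s)).toMeasure)) ξ :=
    aux_integrable htm.aestronglyMeasurable (C := 1)
      (fun s => abs_le.mpr ⟨by linarith [ht0 s], ht1 s⟩)
  -- invariance
  have hbind : ξ.bind ⇑P = ξ := by
    ext A hA
    rw [Measure.bind_apply hA P.measurable.aemeasurable]
    exact (hinv A hA).symm
  have hlin1 : ∀ s, (∫⁻ x, ENNReal.ofReal (d (Sum.inl x) (Sum.inr (φ x))) ∂(P s)) ≤ 1 := by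
    intro s
    calc (∫⁻ x, ENNReal.ofReal (d (Sum.inl x) (Sum.inr (φ x))) ∂(P s)) ≤ ∫⁻ _, 1 ∂(P s) :=
        lintegral_mono fun x => ENNReal.ofReal_le_one.mpr (hg1 x)
      _ = 1 := by simp
  have hinv' : (∫ s, (∫ x, d (Sum.inl x) (Sum.inr (φ x)) ∂(P s)) ∂ξ)
      = ∫ x, d (Sum.inl x) (Sum.inr (φ x)) ∂ξ := by
    rw [funext hIg_eq]
    rw [integral_toReal ((Measurable.lintegral_kernel hgE).aemeasurable)
      (ae_of_all _ fun s => lt_of_le_of_lt (hlin1 s) ENNReal.one_lt_top)]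
    rw [integral_eq_lintegral_of_nonneg_ae (ae_of_all _ hg0) hgm.aestronglyMeasurable]
    congr 1
    rw [← Measure.lintegral_bind P.measurable.aemeasurable hgE.aemeasurable, hbind]
  -- integrate the pointwise inequality
  have hmain : (∫ x, d (Sum.inl x) (Sum.inr (φ x)) ∂ξ)
      ≤ (1 - γ) * (∫ s, |r s - rb (φ s)| ∂ξ)
        + γ * ((∫ x, d (Sum.inl x) (Sum.inr (φ x)) ∂ξ)
          + Kb * (∫ s, tvDist ((P s).map φ) ((Pb (φ s)).toMeasure) ∂ξ)) := by
    have hint_rhs2 : Integrable (fun s => (∫ x, d (Sum.inl x) (Sum.inr (φ x)) ∂(P s))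
        + Kb * tvDist ((P s).map φ) ((Pb (φ s)).toMeasure)) ξ :=
      hint_Ig.add (hint_t.const_mul _)
    calc (∫ x, d (Sum.inl x) (Sum.inr (φ x)) ∂ξ)
        ≤ ∫ s, ((1 - γ) * |r s - rb (φ s)|
            + γ * ((∫ x, d (Sum.inl x) (Sum.inr (φ x)) ∂(P s))
              + Kb * tvDist ((P s).map φ) ((Pb (φ s)).toMeasure))) ∂ξ :=
          integral_mono (hint_g ξ) ((hint_u.const_mul _).add (hint_rhs2.const_mul _)) hpt
      _ = (1 - γ) * (∫ s, |r s - rb (φ s)| ∂ξ)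
          + γ * ((∫ s, (∫ x, d (Sum.inl x) (Sum.inr (φ x)) ∂(P s)) ∂ξ)
            + Kb * (∫ s, tvDist ((P s).map φ) ((Pb (φ s)).toMeasure) ∂ξ)) := by
          rw [integral_add (hint_u.const_mul _) (hint_rhs2.const_mul _),
            integral_const_mul, integral_const_mul,
            integral_add hint_Ig (hint_t.const_mul _), integral_const_mul]
      _ = _ := by rw [hinv']
  have hGle : (∫ x, d (Sum.inl x) (Sum.inr (φ x)) ∂ξ)
      ≤ (∫ s, |r s - rb (φ s)| ∂ξ)
        + γ * Kb * (∫ s, tvDist ((P s).map φ) ((Pb (φ s)).toMeasure) ∂ξ) / (1 - γ) := by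
    have h2 : (∫ x, d (Sum.inl x) (Sum.inr (φ x)) ∂ξ) - (∫ s, |r s - rb (φ s)| ∂ξ)
        ≤ γ * Kb * (∫ s, tvDist ((P s).map φ) ((Pb (φ s)).toMeasure) ∂ξ) / (1 - γ) := by
      rw [le_div_iff₀ h1γ]
      nlinarith [hmain]
    linarith
  -- mass bound
  have hmass : ∀ s₀ : S, d (Sum.inl s₀) (Sum.inr (φ s₀)) * (ξ {s₀}).toReal
      ≤ ∫ x, d (Sum.inl x) (Sum.inr (φ x)) ∂ξ := by
    intro s₀
    have h1 : (∫ x in {s₀}, d (Sum.inl x) (Sum.inr (φ x)) ∂ξ)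
        ≤ ∫ x, d (Sum.inl x) (Sum.inr (φ x)) ∂ξ :=
      setIntegral_le_integral (hint_g ξ) (ae_of_all _ hg0)
    simpa [Measure.restrict_singleton, integral_smul_measure, integral_dirac,
      smul_eq_mul, mul_comm] using h1
  have hm1 : 0 < (ξ {s₁}).toReal := ENNReal.toReal_pos hs₁.ne' (measure_ne_top _ _)
  have hm2 : 0 < (ξ {s₂}).toReal := ENNReal.toReal_pos hs₂.ne' (measure_ne_top _ _)
  have hg_le : ∀ s₀ : S, 0 < (ξ {s₀}).toReal → d (Sum.inl s₀) (Sum.inr (φ s₀))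
      ≤ (∫ x, d (Sum.inl x) (Sum.inr (φ x)) ∂ξ) * (ξ {s₀}).toReal⁻¹ := by
    intro s₀ hm
    rw [← div_eq_mul_inv, le_div_iff₀ hm]
    exact hmass s₀
  -- triangle inequality
  have htri : d (Sum.inl s₁) (Sum.inl s₂)
      ≤ d (Sum.inl s₁) (Sum.inr (φ s₁)) + d (Sum.inl s₂) (Sum.inr (φ s₂)) := by
    have h := hdtri (Sum.inl s₁) (Sum.inr (φ s₁)) (Sum.inl s₂)
    have h2 : d (Sum.inr (φ s₁)) (Sum.inl s₂) = d (Sum.inl s₂) (Sum.inr (φ s₂)) := by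
      rw [hφeq, hdsymm]
    linarith
  calc d (Sum.inl s₁) (Sum.inl s₂)
      ≤ d (Sum.inl s₁) (Sum.inr (φ s₁)) + d (Sum.inl s₂) (Sum.inr (φ s₂)) := htri
    _ ≤ (∫ x, d (Sum.inl x) (Sum.inr (φ x)) ∂ξ) * (ξ {s₁}).toReal⁻¹
        + (∫ x, d (Sum.inl x) (Sum.inr (φ x)) ∂ξ) * (ξ {s₂}).toReal⁻¹ :=
        add_le_add (hg_le s₁ hm1) (hg_le s₂ hm2)
    _ = (∫ x, d (Sum.inl x) (Sum.inr (φ x)) ∂ξ) * ((ξ {s₁}).toReal⁻¹ + (ξ {s₂}).toReal⁻¹) := by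
        ring
    _ ≤ _ := by
        apply mul_le_mul_of_nonneg_right hGle
        positivity
end

section
/- Let d̄ : S̄ × S̄ → ℝ be a nonnegative function and, for probability measures μ, ν on S̄, define W_d̄(μ, ν) = sup { |Σ_{x̄} f(x̄) μ({x̄}) − Σ_{x̄} f(x̄) ν({x̄})| : f : S̄ → ℝ with |f(x̄) − f(ȳ)| ≤ d̄(x̄,ȳ) for all x̄, ȳ }. Then ∫ W_d̄(φ∗P(·|s), P̄(φ(s))) dξ(s) ≤ ∫ ( ∫ W_d̄(δ_{φ(s')}, P̄(φ(s))) P(ds'|s) ) dξ(s), where δ_{x̄} denotes the Dirac measure at x̄. In particular, the local transition loss L_P is bounded above by the expected Wasserstein distance between the Dirac at the embedded successor state and the latent transition distribution. -/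
open MeasureTheory ProbabilityTheory

/-- Dual Wasserstein distance between two measures on a finite type `Sb` with respect to a
cost function `db`, expressed through sums over singletons. -/
noncomputable def wassFin {Sb : Type*} [Fintype Sb] [MeasurableSpace Sb]
    (db : Sb → Sb → ℝ) (μ ν : Measure Sb) : ℝ :=
  ⨆ f : {f : Sb → ℝ // ∀ x y, |f x - f y| ≤ db x y},
    |(∑ x, f.1 x * (μ {x}).toReal) - ∑ x, f.1 x * (ν {x}).toReal|

section Aux

variable {Sb : Type*} [Fintype Sb] [Nonempty Sb] [MeasurableSpace Sb]
  [MeasurableSingletonClass Sb]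

/-- maximum of the cost -/
noncomputable def dbMax (db : Sb → Sb → ℝ) : ℝ :=
  ⨆ p : Sb × Sb, db p.1 p.2

set_option linter.unusedSectionVars false

lemma le_dbMax (db : Sb → Sb → ℝ) (x y : Sb) : db x y ≤ dbMax db :=
  le_ciSup (f := fun p : Sb × Sb => db p.1 p.2)
    (Set.Finite.bddAbove (Set.finite_range _)) (⟨x, y⟩ : Sb × Sb)

lemma sum_singleton_toReal (μ : Measure Sb) [IsProbabilityMeasure μ] :
    ∑ x, (μ {x}).toReal = 1 := by
  have := integral_fintype (μ := μ) (integrable_const (1 : ℝ))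
  simpa [Measure.real] using this.symm

lemma abs_sum_sub_sum_le (db : Sb → Sb → ℝ)
    (f : Sb → ℝ) (hf : ∀ x y, |f x - f y| ≤ db x y)
    (μ ν : Measure Sb) [IsProbabilityMeasure μ] [IsProbabilityMeasure ν] :
    |(∑ x, f x * (μ {x}).toReal) - ∑ x, f x * (ν {x}).toReal| ≤ 2 * dbMax db := by
  obtain ⟨x0⟩ := (inferInstance : Nonempty Sb)
  have hμ := sum_singleton_toReal μ
  have hν := sum_singleton_toReal ν
  have key : (∑ x, f x * (μ {x}).toReal) - ∑ x, f x * (ν {x}).toReal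
      = ∑ x, (f x - f x0) * ((μ {x}).toReal - (ν {x}).toReal) := by
    simp only [sub_mul, mul_sub, Finset.sum_sub_distrib, ← Finset.mul_sum, hμ, hν]
    ring
  rw [key]
  calc |∑ x, (f x - f x0) * ((μ {x}).toReal - (ν {x}).toReal)|
      ≤ ∑ x, |(f x - f x0) * ((μ {x}).toReal - (ν {x}).toReal)| :=
        Finset.abs_sum_le_sum_abs _ _
    _ ≤ ∑ x, dbMax db * ((μ {x}).toReal + (ν {x}).toReal) := by
        apply Finset.sum_le_sum
        intro x _
        rw [abs_mul]
        apply mul_le_mul ((hf x x0).trans (le_dbMax db x x0))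
          ((abs_sub ((μ {x}).toReal) ((ν {x}).toReal)).trans ?_)
          (abs_nonneg _) ((abs_nonneg (f x - f x0)).trans
            ((hf x x0).trans (le_dbMax db x x0)))
        simp [abs_of_nonneg ENNReal.toReal_nonneg]
    _ = 2 * dbMax db := by
        rw [← Finset.mul_sum, Finset.sum_add_distrib, hμ, hν]; ring

lemma wassFin_bddAbove (db : Sb → Sb → ℝ)
    (μ ν : Measure Sb) [IsProbabilityMeasure μ] [IsProbabilityMeasure ν] :
    BddAbove (Set.range fun f : {f : Sb → ℝ // ∀ x y, |f x - f y| ≤ db x y} =>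
      |(∑ x, f.1 x * (μ {x}).toReal) - ∑ x, f.1 x * (ν {x}).toReal|) := by
  refine ⟨2 * dbMax db, ?_⟩
  rintro r ⟨f, rfl⟩
  exact abs_sum_sub_sum_le db f.1 f.2 μ ν

lemma wassFin_nonneg (db : Sb → Sb → ℝ) (hdb : ∀ x y, 0 ≤ db x y)
    (μ ν : Measure Sb) [IsProbabilityMeasure μ] [IsProbabilityMeasure ν] :
    0 ≤ wassFin db μ ν := by
  have h0 : ∀ x y, |(0 : Sb → ℝ) x - (0 : Sb → ℝ) y| ≤ db x y := by
    intro x y; simpa using hdb x y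
  have := le_ciSup (f := fun f : {f : Sb → ℝ // ∀ x y, |f x - f y| ≤ db x y} =>
      |(∑ x, f.1 x * (μ {x}).toReal) - ∑ x, f.1 x * (ν {x}).toReal|)
    (wassFin_bddAbove db μ ν) ⟨0, h0⟩
  simpa [wassFin] using this

lemma lip_nonempty (db : Sb → Sb → ℝ) (hdb : ∀ x y, 0 ≤ db x y) :
    Nonempty {f : Sb → ℝ // ∀ x y, |f x - f y| ≤ db x y} :=
  ⟨⟨0, fun x y => by simpa using hdb x y⟩⟩

lemma wassFin_le_bound (db : Sb → Sb → ℝ) (hdb : ∀ x y, 0 ≤ db x y)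
    (μ ν : Measure Sb) [IsProbabilityMeasure μ] [IsProbabilityMeasure ν] :
    wassFin db μ ν ≤ 2 * dbMax db := by
  have := lip_nonempty db hdb
  exact ciSup_le fun f => abs_sum_sub_sum_le db f.1 f.2 μ ν

lemma sum_dirac (f : Sb → ℝ) (a : Sb) :
    ∑ x, f x * ((Measure.dirac a) {x}).toReal = f a := by
  rw [Finset.sum_eq_single a]
  · simp [Measure.dirac_apply' _ (measurableSet_singleton a)]
  · intro x _ hx
    simp [Measure.dirac_apply' _ (measurableSet_singleton x), Set.indicator,
      (Ne.symm hx)]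
  · simp

lemma integrable_comp_phi {S : Type*} [MeasurableSpace S] (μ : Measure S) [IsFiniteMeasure μ]
    (φ : S → Sb) (hφ : Measurable φ) [DiscreteMeasurableSpace Sb] (g : Sb → ℝ) :
    Integrable (fun s => g (φ s)) μ := by
  refine (integrable_const (∑ x, |g x|)).mono'
    ((Measurable.of_discrete.comp hφ).aestronglyMeasurable) (ae_of_all _ fun s => ?_)
  simpa [Real.norm_eq_abs] using
    Finset.single_le_sum (f := fun x => |g x|) (fun i _ => abs_nonneg _)
      (Finset.mem_univ (φ s))

lemma wassFin_map_le {S : Type*} [MeasurableSpace S] [DiscreteMeasurableSpace Sb]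
    (db : Sb → Sb → ℝ) (hdb : ∀ x y, 0 ≤ db x y)
    (μ : Measure S) [IsProbabilityMeasure μ] (φ : S → Sb) (hφ : Measurable φ)
    (ν : Measure Sb) [IsProbabilityMeasure ν] :
    wassFin db (μ.map φ) ν ≤ ∫ s', wassFin db (Measure.dirac (φ s')) ν ∂μ := by
  have hne := lip_nonempty db hdb
  refine ciSup_le fun f => ?_
  set A := ∑ x, f.1 x * (ν {x}).toReal with hA
  haveI : IsProbabilityMeasure (μ.map φ) := Measure.isProbabilityMeasure_map hφ.aemeasurable
  have h1 : ∑ x, f.1 x * ((μ.map φ) {x}).toReal = ∫ s', f.1 (φ s') ∂μ := by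
    rw [← integral_map hφ.aemeasurable (Measurable.of_discrete.aestronglyMeasurable),
      integral_fintype Integrable.of_finite]
    simp [mul_comm, Measure.real]
  rw [h1]
  have hint1 : Integrable (fun s' => f.1 (φ s')) μ := integrable_comp_phi μ φ hφ f.1
  calc |(∫ s', f.1 (φ s') ∂μ) - A|
      = |∫ s', (f.1 (φ s') - A) ∂μ| := by
        rw [integral_sub hint1 (integrable_const A), integral_const]
        simp
    _ ≤ ∫ s', |f.1 (φ s') - A| ∂μ := by
        simpa [Real.norm_eq_abs] using
          norm_integral_le_integral_norm (μ := μ) (f := fun s' => f.1 (φ s') - A)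
    _ ≤ ∫ s', wassFin db (Measure.dirac (φ s')) ν ∂μ := by
        refine integral_mono ?_ ?_ fun s' => ?_
        · exact integrable_comp_phi μ φ hφ (fun b => |f.1 b - A|)
        · exact integrable_comp_phi μ φ hφ (fun b => wassFin db (Measure.dirac b) ν)
        · have hd : |f.1 (φ s') - A|
              = |(∑ x, f.1 x * ((Measure.dirac (φ s')) {x}).toReal) - A| := by
            rw [sum_dirac]
          rw [hd]
          exact le_ciSup (f := fun g : {g : Sb → ℝ // ∀ x y, |g x - g y| ≤ db x y} =>
              |(∑ x, g.1 x * ((Measure.dirac (φ s')) {x}).toReal)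
                - ∑ x, g.1 x * (ν {x}).toReal|)
            (wassFin_bddAbove db _ ν) f

end Aux

/-- The local transition loss (with respect to any nonnegative cost `db` on the latent space)
is bounded above by the expected Wasserstein distance between the Dirac measure at the
embedded successor state and the latent transition distribution. -/
theorem transition_loss_le_sample_upper_bound
    {S : Type*} [MeasurableSpace S]
    {Sb : Type*} [Fintype Sb] [Nonempty Sb] [MeasurableSpace Sb] [DiscreteMeasurableSpace Sb]
    (P : Kernel S S) [IsMarkovKernel P]
    (Pb : Sb → PMF Sb)
    (φ : S → Sb) (hφ : Measurable φ)
    (ξ : Measure S) [IsProbabilityMeasure ξ]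
    (hinv : ∀ A : Set S, MeasurableSet A → ξ A = ∫⁻ s, P s A ∂ξ)
    (db : Sb → Sb → ℝ) (hdb : ∀ x y, 0 ≤ db x y) :
    ∫ s, wassFin db ((P s).map φ) ((Pb (φ s)).toMeasure) ∂ξ ≤
      ∫ s, (∫ s', wassFin db (Measure.dirac (φ s')) ((Pb (φ s)).toMeasure) ∂(P s)) ∂ξ := by
  set W : Sb → Sb → ℝ := fun b a => wassFin db (Measure.dirac a) (Pb b).toMeasure with hW
  set g : S → ℝ := fun s => ∫ s', W (φ s) (φ s') ∂(P s) with hg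
  have hWb : ∀ b a, ‖W b a‖ ≤ 2 * dbMax db := by
    intro b a
    rw [Real.norm_eq_abs, abs_of_nonneg (wassFin_nonneg db hdb _ _)]
    exact wassFin_le_bound db hdb _ _
  have hg_bound : ∀ s, ‖g s‖ ≤ 2 * dbMax db := by
    intro s
    have := norm_integral_le_of_norm_le_const (μ := P s)
      (f := fun s' => W (φ s) (φ s')) (C := 2 * dbMax db) (ae_of_all _ fun s' => hWb _ _)
    simpa using this
  have hgeq : g = fun s => ∑ a, (P s (φ ⁻¹' {a})).toReal * W (φ s) a := by
    funext s
    show ∫ s', W (φ s) (φ s') ∂(P s) = _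
    rw [← integral_map hφ.aemeasurable (Measurable.of_discrete.aestronglyMeasurable),
      integral_fintype Integrable.of_finite]
    refine Finset.sum_congr rfl fun a _ => ?_
    rw [Measure.real, Measure.map_apply hφ (measurableSet_singleton a)]
    simp [smul_eq_mul, Measure.real]
  have hg_meas : Measurable g := by
    rw [hgeq]
    refine Finset.measurable_sum _ fun a _ => Measurable.mul ?_ ?_
    · exact (P.measurable_coe (hφ (measurableSet_singleton a))).ennreal_toReal
    · exact (Measurable.of_discrete (f := fun b => W b a)).comp hφ
  have hgi : Integrable g ξ :=
    (integrable_const (2 * dbMax db)).mono' hg_meas.aestronglyMeasurable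
      (ae_of_all _ hg_bound)
  refine integral_mono_of_nonneg (ae_of_all _ fun s => ?_) hgi (ae_of_all _ fun s => ?_)
  · haveI : IsProbabilityMeasure ((P s).map φ) := Measure.isProbabilityMeasure_map hφ.aemeasurable
    exact wassFin_nonneg db hdb _ _
  · exact wassFin_map_le db hdb (P s) φ hφ _
end

section
/- Assume rewards are bounded by one half, i.e. |r(s)| ≤ 1/2 for all s ∈ S and |r̄(x̄)| ≤ 1/2 for all x̄ ∈ S̄, and that V̄ is K-Lipschitz-valued for some K ≥ 0. Define the empirical losses L̂_R = (1/T) Σ_{t<T} |r(S_t) − r̄(φ(S_t))| and L̂_P = (1/T) Σ_{t<T} (1 − P̄(φ(S_t))(φ(S'_t))). Let ε, δ ∈ (0,1). If T ≥ ⌈−log(δ/4)·(1+γK)²/(2ε²(1−γ)²)⌉, then with probability at least 1−δ: ∫ |V(s) − V̄(φ(s))| dξ(s) ≤ (L̂_R + γ K L̂_P)/(1−γ) + ε. -/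
open MeasureTheory ProbabilityTheory

section PACValueDifferenceAux

open Real

lemma hoeff_g_pos {p : ℝ} (hp0 : 0 ≤ p) (hp1 : p ≤ 1) (h : ℝ) :
    0 < 1 - p + p * Real.exp h := by
  rcases eq_or_lt_of_le hp1 with rfl | hp1'
  · simpa using Real.exp_pos h
  · have : 0 ≤ p * Real.exp h := mul_nonneg hp0 (Real.exp_pos h).le
    linarith

lemma hoeff_scalar_nonneg {p : ℝ} (hp0 : 0 ≤ p) (hp1 : p ≤ 1) {h : ℝ} (hh : 0 ≤ h) :
    -p * h + Real.log (1 - p + p * Real.exp h) ≤ h ^ 2 / 8 := by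
  set g : ℝ → ℝ := fun u => 1 - p + p * Real.exp u with hgdef
  have hgpos : ∀ u : ℝ, 0 < g u := fun u => hoeff_g_pos hp0 hp1 u
  have hg' : ∀ u : ℝ, HasDerivAt g (p * Real.exp u) u := fun u =>
    ((Real.hasDerivAt_exp u).const_mul p).const_add (1 - p)
  set F : ℝ → ℝ := fun u => -p * u + Real.log (g u) with hFdef
  set F' : ℝ → ℝ := fun u => -p + p * Real.exp u / g u with hF'def
  have hF : ∀ u : ℝ, HasDerivAt F (F' u) u := by
    intro u
    have h1 : HasDerivAt (fun u : ℝ => -p * u) (-p) u := by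
      simpa using (hasDerivAt_id u).const_mul (-p)
    exact h1.add ((hg' u).log (hgpos u).ne')
  have hF'deriv : ∀ u : ℝ, HasDerivAt F'
      (p * Real.exp u / g u - (p * Real.exp u / g u) ^ 2) u := by
    intro u
    have hq : HasDerivAt (fun u => p * Real.exp u / g u)
        ((p * Real.exp u * g u - p * Real.exp u * (p * Real.exp u)) / g u ^ 2) u :=
      ((Real.hasDerivAt_exp u).const_mul p).div (hg' u) (hgpos u).ne'
    have habs : ∀ a gg : ℝ, gg ≠ 0 → (a * gg - a * a) / gg ^ 2 = a / gg - (a / gg) ^ 2 := by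
      intro a gg hg
      field_simp
    rw [habs _ _ (hgpos u).ne'] at hq
    have := (hasDerivAt_const u (-p)).add hq
    simp only [zero_add] at this; exact this
  have hF''le : ∀ u : ℝ, p * Real.exp u / g u - (p * Real.exp u / g u) ^ 2 ≤ 1 / 4 := by
    intro u
    nlinarith [sq_nonneg (p * Real.exp u / g u - 1 / 2)]
  -- Step 1 : F' s ≤ s / 4 for s ≥ 0
  have hF'0 : F' 0 = 0 := by
    simp only [hF'def, hgdef, Real.exp_zero, mul_one]
    have : 1 - p + p = 1 := by ring
    rw [this]
    simp
  have mono1 : MonotoneOn (fun u => u / 4 - F' u) (Set.Ici (0 : ℝ)) := by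
    apply monotoneOn_of_deriv_nonneg (convex_Ici 0)
    all_goals intro u hu
    · exact (((hasDerivAt_id u).div_const 4).sub (hF'deriv u)).continuousAt.continuousWithinAt
    · exact (((hasDerivAt_id u).div_const 4).sub (hF'deriv u)).differentiableAt.differentiableWithinAt
    · have hd : HasDerivAt (fun u : ℝ => u / 4 - F' u)
          (1 / 4 - (p * Real.exp u / g u - (p * Real.exp u / g u) ^ 2)) u :=
        ((hasDerivAt_id u).div_const 4).sub (hF'deriv u)
      rw [hd.deriv]
      have := hF''le u
      linarith
  have hF'le : ∀ s : ℝ, 0 ≤ s → F' s ≤ s / 4 := by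
    intro s hs
    have := mono1 (Set.self_mem_Ici) (Set.mem_Ici.2 hs) hs
    simp only [hF'0] at this
    linarith
  -- Step 2 : F h ≤ h^2/8 for h ≥ 0
  have hF0 : F 0 = 0 := by
    simp only [hFdef, hgdef, Real.exp_zero, mul_one]
    have : 1 - p + p = 1 := by ring
    rw [this]
    simp
  have mono2 : MonotoneOn (fun u => u ^ 2 / 8 - F u) (Set.Ici (0 : ℝ)) := by
    apply monotoneOn_of_deriv_nonneg (convex_Ici 0)
    all_goals intro u hu
    · exact (((hasDerivAt_pow 2 u).div_const 8).sub (hF u)).continuousAt.continuousWithinAt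
    · exact (((hasDerivAt_pow 2 u).div_const 8).sub (hF u)).differentiableAt.differentiableWithinAt
    · rw [interior_Ici] at hu
      have hd : HasDerivAt (fun u : ℝ => u ^ 2 / 8 - F u)
          ((2 : ℕ) * u ^ 1 / 8 - F' u) u :=
        ((hasDerivAt_pow 2 u).div_const 8).sub (hF u)
      rw [hd.deriv]
      have := hF'le u (le_of_lt hu)
      simp only [pow_one, Nat.cast_ofNat]
      linarith
  have := mono2 (Set.self_mem_Ici) (Set.mem_Ici.2 hh) hh
  simp only [hF0] at this
  have h0 : (0:ℝ) ^ 2 / 8 - 0 = 0 := by norm_num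
  rw [h0] at this
  linarith

lemma hoeff_scalar {p : ℝ} (hp0 : 0 ≤ p) (hp1 : p ≤ 1) (h : ℝ) :
    -p * h + Real.log (1 - p + p * Real.exp h) ≤ h ^ 2 / 8 := by
  rcases le_or_gt 0 h with hh | hh
  · exact hoeff_scalar_nonneg hp0 hp1 hh
  · have hp0' : 0 ≤ 1 - p := by linarith
    have hp1' : 1 - p ≤ 1 := by linarith
    have key := hoeff_scalar_nonneg hp0' hp1' (h := -h) (by linarith)
    have hid : -p * h + Real.log (1 - p + p * Real.exp h)
        = -(1 - p) * (-h) + Real.log (1 - (1 - p) + (1 - p) * Real.exp (-h)) := by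
      have he : Real.exp (-h) * Real.exp h = 1 := by
        rw [← Real.exp_add]; simp
      have h1 : 1 - (1 - p) + (1 - p) * Real.exp (-h)
          = Real.exp (-h) * (1 - p + p * Real.exp h) := by
        linear_combination -p * he
      rw [h1, Real.log_mul (Real.exp_ne_zero _) (hoeff_g_pos hp0 hp1 h).ne',
        Real.log_exp]
      ring
    rw [hid]
    calc -(1 - p) * (-h) + Real.log (1 - (1 - p) + (1 - p) * Real.exp (-h))
        ≤ (-h) ^ 2 / 8 := key
      _ = h ^ 2 / 8 := by ring

lemma bdd_integrable {α : Type*} [MeasurableSpace α] (μ : Measure α) [IsFiniteMeasure μ]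
    {g : α → ℝ} (hg : Measurable g) (C : ℝ) (hC : ∀ a, |g a| ≤ C) : Integrable g μ :=
  ⟨hg.aestronglyMeasurable,
    HasFiniteIntegral.of_bounded (C := C) (ae_of_all _ (by simpa [Real.norm_eq_abs] using hC))⟩

lemma hoeff_mgf {Ω : Type*} [MeasurableSpace Ω] (μ : Measure Ω) [IsProbabilityMeasure μ]
    (Y : Ω → ℝ) (hY : Measurable Y) (a b : ℝ) (hab : a < b)
    (hYa : ∀ ω, a ≤ Y ω) (hYb : ∀ ω, Y ω ≤ b) (hEY : ∫ ω, Y ω ∂μ = 0) (t : ℝ) :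
    mgf Y μ t ≤ Real.exp (t ^ 2 * (b - a) ^ 2 / 8) := by
  have hba : (0:ℝ) < b - a := by linarith
  have hYabs : ∀ ω, |Y ω| ≤ |a| ⊔ |b| := by
    intro ω
    rw [abs_le]
    constructor
    · calc -(|a| ⊔ |b|) ≤ -|a| := by simp
        _ ≤ a := neg_abs_le a
        _ ≤ Y ω := hYa ω
    · exact (hYb ω).trans ((le_abs_self b).trans (le_max_right _ _))
  have hIntY : Integrable Y μ := bdd_integrable μ hY _ hYabs
  have ha0 : a ≤ 0 := by
    have h1 : ∫ _ω, a ∂μ ≤ ∫ ω, Y ω ∂μ := integral_mono (integrable_const a) hIntY hYa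
    rw [hEY, integral_const] at h1
    simpa using h1
  have hb0 : 0 ≤ b := by
    have h1 : ∫ ω, Y ω ∂μ ≤ ∫ _ω, b ∂μ := integral_mono hIntY (integrable_const b) hYb
    rw [hEY, integral_const] at h1
    simpa using h1
  -- pointwise convexity bound
  have hpt : ∀ ω, Real.exp (t * Y ω) ≤
      (Real.exp (t * a) / (b - a)) * (b - Y ω) + (Real.exp (t * b) / (b - a)) * (Y ω - a) := by
    intro ω
    have hθ : 0 ≤ (b - Y ω) / (b - a) := div_nonneg (by linarith [hYb ω]) hba.le
    have hη : 0 ≤ (Y ω - a) / (b - a) := div_nonneg (by linarith [hYa ω]) hba.le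
    have hsum : (b - Y ω) / (b - a) + (Y ω - a) / (b - a) = 1 := by
      field_simp
      ring
    have hcvx := convexOn_exp.2 (Set.mem_univ (t * a)) (Set.mem_univ (t * b)) hθ hη hsum
    have harg : ((b - Y ω) / (b - a)) • (t * a) + ((Y ω - a) / (b - a)) • (t * b) = t * Y ω := by
      simp only [smul_eq_mul]
      field_simp
      ring
    rw [harg] at hcvx
    calc Real.exp (t * Y ω)
        ≤ ((b - Y ω) / (b - a)) • Real.exp (t * a) + ((Y ω - a) / (b - a)) • Real.exp (t * b) := hcvx
      _ = (Real.exp (t * a) / (b - a)) * (b - Y ω) + (Real.exp (t * b) / (b - a)) * (Y ω - a) := by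
          simp only [smul_eq_mul]; ring
  have hIntExp : Integrable (fun ω => Real.exp (t * Y ω)) μ := by
    refine bdd_integrable μ (hY.const_mul t).exp (Real.exp (|t| * (|a| ⊔ |b|))) fun ω => ?_
    rw [abs_of_pos (Real.exp_pos _), Real.exp_le_exp]
    calc t * Y ω ≤ |t * Y ω| := le_abs_self _
      _ = |t| * |Y ω| := abs_mul t (Y ω)
      _ ≤ |t| * (|a| ⊔ |b|) := by
          exact mul_le_mul_of_nonneg_left (hYabs ω) (abs_nonneg t)
  -- integrate
  have hInt2 : mgf Y μ t ≤ (Real.exp (t * a) / (b - a)) * b + (Real.exp (t * b) / (b - a)) * (-a) := by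
    have hA : Integrable (fun ω => (Real.exp (t * a) / (b - a)) * (b - Y ω)) μ :=
      ((integrable_const b).sub hIntY).const_mul _
    have hB : Integrable (fun ω => (Real.exp (t * b) / (b - a)) * (Y ω - a)) μ :=
      (hIntY.sub (integrable_const a)).const_mul _
    have h1 : mgf Y μ t ≤ ∫ ω, ((Real.exp (t * a) / (b - a)) * (b - Y ω)
        + (Real.exp (t * b) / (b - a)) * (Y ω - a)) ∂μ := by
      refine integral_mono hIntExp ?_ hpt
      exact hA.add hB
    rw [integral_add hA hB, integral_const_mul, integral_const_mul,
      integral_sub (integrable_const b) hIntY, integral_sub hIntY (integrable_const a),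
      hEY, integral_const, integral_const] at h1
    simpa using h1
  set p : ℝ := -a / (b - a) with hpdef
  have hp0 : 0 ≤ p := div_nonneg (by linarith) hba.le
  have hp1 : p ≤ 1 := by
    rw [div_le_one hba]
    linarith
  set hh : ℝ := t * (b - a) with hhdef
  have hgpos := hoeff_g_pos hp0 hp1 hh
  have hkey : (Real.exp (t * a) / (b - a)) * b + (Real.exp (t * b) / (b - a)) * (-a)
      = Real.exp (t * a) * (1 - p + p * Real.exp hh) := by
    have hE : Real.exp (t * b) = Real.exp (t * a) * Real.exp hh := by
      rw [← Real.exp_add, hhdef]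
      ring_nf
    rw [hE, hpdef]
    field_simp
    ring
  have hfin : Real.exp (t * a) * (1 - p + p * Real.exp hh) ≤ Real.exp (t ^ 2 * (b - a) ^ 2 / 8) := by
    have h2 : Real.exp (t * a) * (1 - p + p * Real.exp hh)
        = Real.exp (t * a + Real.log (1 - p + p * Real.exp hh)) := by
      rw [Real.exp_add, Real.exp_log hgpos]
    rw [h2, Real.exp_le_exp]
    have hta : t * a = -p * hh := by
      rw [hpdef, hhdef]
      field_simp
    rw [hta]
    calc -p * hh + Real.log (1 - p + p * Real.exp hh) ≤ hh ^ 2 / 8 := hoeff_scalar hp0 hp1 hh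
      _ = t ^ 2 * (b - a) ^ 2 / 8 := by rw [hhdef]; ring
  calc mgf Y μ t ≤ _ := hInt2
    _ = _ := hkey
    _ ≤ _ := hfin

lemma invariant_integral {S : Type*} [MeasurableSpace S] (P : Kernel S S) [IsMarkovKernel P]
    (ξ : Measure S) [IsProbabilityMeasure ξ]
    (hinv : ∀ A : Set S, MeasurableSet A → ξ A = ∫⁻ s, P s A ∂ξ)
    {g : S → ℝ} (hg : Measurable g) (hg0 : ∀ s, 0 ≤ g s) (C : ℝ) (hgC : ∀ s, g s ≤ C) :
    ∫ s, (∫ s', g s' ∂(P s)) ∂ξ = ∫ s, g s ∂ξ := by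
  have hbind : ξ.bind (⇑P) = ξ := by
    ext A hA
    rw [Measure.bind_apply hA P.measurable.aemeasurable]
    exact (hinv A hA).symm
  have hmeasL : Measurable fun s => ∫⁻ s', ENNReal.ofReal (g s') ∂(P s) := by
    have h : Measurable fun q : S × S => ENNReal.ofReal (g q.2) :=
      (hg.comp measurable_snd).ennreal_ofReal
    exact h.lintegral_kernel_prod_right'
  have hLlt : ∀ s, (∫⁻ s', ENNReal.ofReal (g s') ∂(P s)) ≤ ENNReal.ofReal C := by
    intro s
    calc ∫⁻ s', ENNReal.ofReal (g s') ∂(P s) ≤ ∫⁻ _s', ENNReal.ofReal C ∂(P s) :=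
        lintegral_mono fun s' => ENNReal.ofReal_le_ofReal (hgC s')
      _ = ENNReal.ofReal C := by simp
  have hinner : ∀ s, ∫ s', g s' ∂(P s) = (∫⁻ s', ENNReal.ofReal (g s') ∂(P s)).toReal := fun s =>
    integral_eq_lintegral_of_nonneg_ae (ae_of_all _ hg0) hg.aestronglyMeasurable
  calc ∫ s, (∫ s', g s' ∂(P s)) ∂ξ
      = ∫ s, (∫⁻ s', ENNReal.ofReal (g s') ∂(P s)).toReal ∂ξ :=
        integral_congr_ae (ae_of_all _ hinner)
    _ = (∫⁻ s, (∫⁻ s', ENNReal.ofReal (g s') ∂(P s)) ∂ξ).toReal :=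
        integral_toReal hmeasL.aemeasurable
          (ae_of_all _ fun s => lt_of_le_of_lt (hLlt s) ENNReal.ofReal_lt_top)
    _ = (∫⁻ s', ENNReal.ofReal (g s') ∂(ξ.bind ⇑P)).toReal := by
        rw [Measure.lintegral_bind P.measurable.aemeasurable hg.ennreal_ofReal.aemeasurable]
    _ = (∫⁻ s', ENNReal.ofReal (g s') ∂ξ).toReal := by rw [hbind]
    _ = ∫ s, g s ∂ξ :=
        (integral_eq_lintegral_of_nonneg_ae (ae_of_all _ hg0) hg.aestronglyMeasurable).symm

lemma integral_comp_finite {S Sb : Type*} [MeasurableSpace S] [Fintype Sb] [MeasurableSpace Sb]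
    [DiscreteMeasurableSpace Sb] (ρ : Measure S) [IsFiniteMeasure ρ]
    (φ : S → Sb) (hφ : Measurable φ) (w : Sb → ℝ) :
    ∫ s', w (φ s') ∂ρ = ∑ y, (ρ (φ ⁻¹' {y})).toReal * w y := by
  have hpt : ∀ s', w (φ s') = ∑ y : Sb, Set.indicator (φ ⁻¹' {y}) (fun _ => w y) s' := by
    intro s'
    classical
    rw [show (∑ y : Sb, Set.indicator (φ ⁻¹' {y}) (fun _ => w y) s')
        = ∑ y : Sb, if φ s' = y then w y else 0 from Finset.sum_congr rfl fun y _ => by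
          simp [Set.indicator_apply]]
    rw [Finset.sum_ite_eq Finset.univ (φ s') w]
    simp
  calc ∫ s', w (φ s') ∂ρ
      = ∫ s', ∑ y : Sb, Set.indicator (φ ⁻¹' {y}) (fun _ => w y) s' ∂ρ :=
        integral_congr_ae (ae_of_all _ hpt)
    _ = ∑ y : Sb, ∫ s', Set.indicator (φ ⁻¹' {y}) (fun _ => w y) s' ∂ρ :=
        integral_finset_sum _ (fun y _ =>
          (integrable_const (w y)).indicator (hφ (measurableSet_singleton y)))
    _ = ∑ y, (ρ (φ ⁻¹' {y})).toReal * w y := by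
        refine Finset.sum_congr rfl fun y _ => ?_
        rw [integral_indicator_const (w y) (hφ (measurableSet_singleton y))]
        simp [smul_eq_mul, measureReal_def]

lemma sum_preimage_eq_one {S Sb : Type*} [MeasurableSpace S] [Fintype Sb] [MeasurableSpace Sb]
    [DiscreteMeasurableSpace Sb] (ρ : Measure S) [IsProbabilityMeasure ρ]
    (φ : S → Sb) (hφ : Measurable φ) :
    ∑ y : Sb, (ρ (φ ⁻¹' {y})).toReal = 1 := by
  have hd : Pairwise (Function.onFun Disjoint fun y : Sb => φ ⁻¹' {y}) := by
    intro y z hyz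
    refine Set.disjoint_left.2 fun s' h1 h2 => hyz ?_
    simp only [Set.mem_preimage, Set.mem_singleton_iff] at h1 h2
    rw [← h1, h2]
  have hU : ⋃ y : Sb, φ ⁻¹' {y} = Set.univ := by
    ext s'; simp
  have h := measure_iUnion (μ := ρ) hd (fun y => hφ (measurableSet_singleton y))
  rw [hU, measure_univ, tsum_fintype] at h
  rw [← ENNReal.toReal_sum (fun y _ => measure_ne_top ρ _), ← h]
  simp

lemma tv_sum_bound {Sb : Type*} [Fintype Sb] [Nonempty Sb] (μ ν : Sb → ℝ)
    (hμ0 : ∀ y, 0 ≤ μ y) (hμle : ∀ y, μ y ≤ 1) (hν0 : ∀ y, 0 ≤ ν y) (hνle : ∀ y, ν y ≤ 1)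
    (hsμ : ∑ y, μ y = 1) (hsν : ∑ y, ν y = 1)
    (Vb : Sb → ℝ) (K : ℝ) (hK : 0 ≤ K) (hLip : ∀ x y, |Vb x - Vb y| ≤ K) :
    |∑ y, (μ y - ν y) * Vb y| ≤ K * (1 - ∑ y, μ y * ν y) := by
  classical
  have hne : (Finset.univ : Finset Sb).Nonempty := Finset.univ_nonempty
  set Mx := Finset.univ.sup' hne Vb with hMx
  set mn := Finset.univ.inf' hne Vb with hmn
  have hle : ∀ y, Vb y ≤ Mx := fun y => Finset.le_sup' Vb (Finset.mem_univ y)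
  have hge : ∀ y, mn ≤ Vb y := fun y => Finset.inf'_le Vb (Finset.mem_univ y)
  have hMK : Mx - mn ≤ K := by
    obtain ⟨ya, _, hya⟩ := Finset.exists_mem_eq_sup' hne Vb
    obtain ⟨yb, _, hyb⟩ := Finset.exists_mem_eq_inf' hne Vb
    rw [hMx, hmn, hya, hyb]
    calc Vb ya - Vb yb ≤ |Vb ya - Vb yb| := le_abs_self _
      _ ≤ K := hLip ya yb
  set c := (Mx + mn) / 2 with hc
  have hcy : ∀ y, |Vb y - c| ≤ K / 2 := by
    intro y
    rw [abs_le]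
    constructor
    · have := hle y; have := hge y; rw [hc]; push_cast; linarith
    · have := hle y; have := hge y; rw [hc]; linarith
  have hshift : ∑ y, (μ y - ν y) * Vb y = ∑ y, (μ y - ν y) * (Vb y - c) := by
    have e : ∀ y : Sb, (μ y - ν y) * Vb y = (μ y - ν y) * (Vb y - c) + (μ y * c - ν y * c) :=
      fun y => by ring
    rw [Finset.sum_congr rfl (fun y _ => e y), Finset.sum_add_distrib, Finset.sum_sub_distrib,
      ← Finset.sum_mul, ← Finset.sum_mul, hsμ, hsν]
    ring
  have habs : |∑ y, (μ y - ν y) * (Vb y - c)| ≤ ∑ y, |μ y - ν y| * (K / 2) :=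
    (Finset.abs_sum_le_sum_abs _ _).trans (Finset.sum_le_sum fun y _ => by
      rw [abs_mul]
      exact mul_le_mul_of_nonneg_left (hcy y) (abs_nonneg _))
  have hl1 : ∑ y, |μ y - ν y| ≤ 2 - 2 * ∑ y, μ y * ν y := by
    calc ∑ y, |μ y - ν y| ≤ ∑ y, (μ y + ν y - 2 * (μ y * ν y)) := by
          refine Finset.sum_le_sum fun y _ => abs_sub_le_iff.2 ⟨?_, ?_⟩
          · nlinarith [hμ0 y, hμle y, hν0 y, hνle y]
          · nlinarith [hμ0 y, hμle y, hν0 y, hνle y]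
      _ = 2 - 2 * ∑ y, μ y * ν y := by
          rw [Finset.sum_sub_distrib, Finset.sum_add_distrib, hsμ, hsν, ← Finset.mul_sum]
          ring
  calc |∑ y, (μ y - ν y) * Vb y| = |∑ y, (μ y - ν y) * (Vb y - c)| := by rw [hshift]
    _ ≤ ∑ y, |μ y - ν y| * (K / 2) := habs
    _ = (∑ y, |μ y - ν y|) * (K / 2) := by rw [Finset.sum_mul]
    _ ≤ (2 - 2 * ∑ y, μ y * ν y) * (K / 2) :=
        mul_le_mul_of_nonneg_right hl1 (by positivity)
    _ = K * (1 - ∑ y, μ y * ν y) := by ring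

lemma pointwise_bound {S Sb : Type*} [MeasurableSpace S] [Fintype Sb] [Nonempty Sb]
    [MeasurableSpace Sb] [DiscreteMeasurableSpace Sb]
    (P : Kernel S S) [IsMarkovKernel P] (Pb : Sb → PMF Sb) (φ : S → Sb) (hφ : Measurable φ)
    (γ K : ℝ) (hγ0 : 0 ≤ γ) (hK : 0 ≤ K)
    (r : S → ℝ) (rb : Sb → ℝ)
    (V : S → ℝ) (hVmeas : Measurable V) (C : ℝ) (hC : ∀ s, |V s| ≤ C)
    (hVbellman : ∀ s, V s = r s + γ * ∫ s', V s' ∂(P s))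
    (Vb : Sb → ℝ) (hVbbellman : ∀ x, Vb x = rb x + γ * ∑ y, ((Pb x) y).toReal * Vb y)
    (hVbLip : ∀ x y, |Vb x - Vb y| ≤ K) (s : S) :
    |V s - Vb (φ s)| ≤ |r s - rb (φ s)|
      + γ * K * (∫ s', (1 - ((Pb (φ s)) (φ s')).toReal) ∂(P s))
      + γ * ∫ s', |V s' - Vb (φ s')| ∂(P s) := by
  classical
  have hνle : ∀ (x y : Sb), ((Pb x) y).toReal ≤ 1 := by
    intro x y
    have h := PMF.coe_le_one (Pb x) y
    calc ((Pb x) y).toReal ≤ (1 : ENNReal).toReal := ENNReal.toReal_mono ENNReal.one_ne_top h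
      _ = 1 := by simp
  have hν0 : ∀ (x y : Sb), 0 ≤ ((Pb x) y).toReal := fun x y => ENNReal.toReal_nonneg
  have hμle : ∀ y : Sb, ((P s) (φ ⁻¹' {y})).toReal ≤ 1 := by
    intro y
    calc ((P s) (φ ⁻¹' {y})).toReal ≤ (1 : ENNReal).toReal :=
        ENNReal.toReal_mono ENNReal.one_ne_top prob_le_one
      _ = 1 := by simp
  have hμ0 : ∀ y : Sb, 0 ≤ ((P s) (φ ⁻¹' {y})).toReal := fun y => ENNReal.toReal_nonneg
  have hμ1 : ∑ y : Sb, ((P s) (φ ⁻¹' {y})).toReal = 1 := sum_preimage_eq_one (P s) φ hφ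
  have hν1 : ∑ y : Sb, ((Pb (φ s)) y).toReal = 1 := by
    have h := (Pb (φ s)).tsum_coe
    rw [tsum_fintype] at h
    rw [← ENNReal.toReal_sum (fun y _ => PMF.apply_ne_top _ _), h]
    simp
  -- boundedness of Vb
  obtain ⟨y₀⟩ := (inferInstance : Nonempty Sb)
  have hCb : ∀ y, |Vb y| ≤ |Vb y₀| + K := by
    intro y
    calc |Vb y| = |Vb y₀ + (Vb y - Vb y₀)| := by ring_nf
      _ ≤ |Vb y₀| + |Vb y - Vb y₀| := abs_add_le _ _
      _ ≤ |Vb y₀| + K := by linarith [hVbLip y y₀]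
  have hVbmeas : Measurable Vb := measurable_of_countable Vb
  have hVint : Integrable V (P s) := bdd_integrable _ hVmeas C hC
  have hVbφ : Integrable (fun s' => Vb (φ s')) (P s) :=
    bdd_integrable _ (hVbmeas.comp hφ) _ (fun a => hCb (φ a))
  have hνmeas : Measurable (fun y : Sb => ((Pb (φ s)) y).toReal) :=
    measurable_of_countable _
  have hνφ : Integrable (fun s' => ((Pb (φ s)) (φ s')).toReal) (P s) :=
    bdd_integrable _ (hνmeas.comp hφ) 1 (fun s' => by
      rw [abs_of_nonneg (hν0 _ _)]; exact hνle _ _)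
  have keyint1 : ∫ s', Vb (φ s') ∂(P s) = ∑ y, ((P s) (φ ⁻¹' {y})).toReal * Vb y :=
    integral_comp_finite (P s) φ hφ Vb
  have keyint2 : ∫ s', ((Pb (φ s)) (φ s')).toReal ∂(P s)
      = ∑ y, ((P s) (φ ⁻¹' {y})).toReal * ((Pb (φ s)) y).toReal :=
    integral_comp_finite (P s) φ hφ (fun y => ((Pb (φ s)) y).toReal)
  have hsplit : V s - Vb (φ s) = (r s - rb (φ s))
      + γ * ((∫ s', (V s' - Vb (φ s')) ∂(P s))
        + ∑ y, (((P s) (φ ⁻¹' {y})).toReal - ((Pb (φ s)) y).toReal) * Vb y) := by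
    rw [integral_sub hVint hVbφ, keyint1]
    have hsum : ∑ y, (((P s) (φ ⁻¹' {y})).toReal - ((Pb (φ s)) y).toReal) * Vb y
        = ∑ y, ((P s) (φ ⁻¹' {y})).toReal * Vb y - ∑ y, ((Pb (φ s)) y).toReal * Vb y := by
      rw [← Finset.sum_sub_distrib]
      exact Finset.sum_congr rfl fun y _ => by ring
    rw [hsum, hVbellman s, hVbbellman (φ s)]
    ring
  have htv : |∑ y, (((P s) (φ ⁻¹' {y})).toReal - ((Pb (φ s)) y).toReal) * Vb y|
      ≤ K * (1 - ∑ y, ((P s) (φ ⁻¹' {y})).toReal * ((Pb (φ s)) y).toReal) :=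
    tv_sum_bound _ _ hμ0 hμle (hν0 _) (hνle _) hμ1 hν1 Vb K hK hVbLip
  have hPint : ∫ s', (1 - ((Pb (φ s)) (φ s')).toReal) ∂(P s)
      = 1 - ∑ y, ((P s) (φ ⁻¹' {y})).toReal * ((Pb (φ s)) y).toReal := by
    rw [integral_sub (integrable_const 1) hνφ, keyint2, integral_const]
    simp
  have hDle : |∫ s', (V s' - Vb (φ s')) ∂(P s)| ≤ ∫ s', |V s' - Vb (φ s')| ∂(P s) := by
    have h := norm_integral_le_integral_norm (μ := P s) (fun s' => V s' - Vb (φ s'))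
    simpa [Real.norm_eq_abs] using h
  calc |V s - Vb (φ s)|
      = |(r s - rb (φ s)) + γ * ((∫ s', (V s' - Vb (φ s')) ∂(P s))
        + ∑ y, (((P s) (φ ⁻¹' {y})).toReal - ((Pb (φ s)) y).toReal) * Vb y)| := by rw [hsplit]
    _ ≤ |r s - rb (φ s)| + γ * (|∫ s', (V s' - Vb (φ s')) ∂(P s)|
        + |∑ y, (((P s) (φ ⁻¹' {y})).toReal - ((Pb (φ s)) y).toReal) * Vb y|) := by
        refine (abs_add_le _ _).trans ?_
        rw [abs_mul, abs_of_nonneg hγ0]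
        exact add_le_add le_rfl (mul_le_mul_of_nonneg_left (abs_add_le _ _) hγ0)
    _ ≤ |r s - rb (φ s)| + γ * ((∫ s', |V s' - Vb (φ s')| ∂(P s))
        + K * (1 - ∑ y, ((P s) (φ ⁻¹' {y})).toReal * ((Pb (φ s)) y).toReal)) := by
        refine add_le_add le_rfl (mul_le_mul_of_nonneg_left (add_le_add hDle htv) hγ0)
    _ = |r s - rb (φ s)|
      + γ * K * (∫ s', (1 - ((Pb (φ s)) (φ s')).toReal) ∂(P s))
      + γ * ∫ s', |V s' - Vb (φ s')| ∂(P s) := by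
        rw [hPint]
        ring

lemma value_diff_bound {S Sb : Type*} [MeasurableSpace S] [Fintype Sb] [Nonempty Sb]
    [MeasurableSpace Sb] [DiscreteMeasurableSpace Sb]
    (P : Kernel S S) [IsMarkovKernel P] (Pb : Sb → PMF Sb) (φ : S → Sb) (hφ : Measurable φ)
    (ξ : Measure S) [IsProbabilityMeasure ξ]
    (hinv : ∀ A : Set S, MeasurableSet A → ξ A = ∫⁻ s, P s A ∂ξ)
    (γ K : ℝ) (hγ0 : 0 ≤ γ) (hK : 0 ≤ K)
    (r : S → ℝ) (hrmeas : Measurable r) (hrbdd : ∀ s, |r s| ≤ 1 / 2)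
    (rb : Sb → ℝ) (hrbbdd : ∀ x, |rb x| ≤ 1 / 2)
    (V : S → ℝ) (hVmeas : Measurable V) (C : ℝ) (hC : ∀ s, |V s| ≤ C)
    (hVbellman : ∀ s, V s = r s + γ * ∫ s', V s' ∂(P s))
    (Vb : Sb → ℝ) (hVbbellman : ∀ x, Vb x = rb x + γ * ∑ y, ((Pb x) y).toReal * Vb y)
    (hVbLip : ∀ x y, |Vb x - Vb y| ≤ K) :
    (∫ s, |V s - Vb (φ s)| ∂ξ) * (1 - γ) ≤
      ∫ q, (|r q.1 - rb (φ q.1)| + γ * K * (1 - ((Pb (φ q.1)) (φ q.2)).toReal))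
        ∂(ξ.compProd P) := by
  classical
  obtain ⟨y₀⟩ := (inferInstance : Nonempty Sb)
  have hCb : ∀ y, |Vb y| ≤ |Vb y₀| + K := by
    intro y
    calc |Vb y| = |Vb y₀ + (Vb y - Vb y₀)| := by ring_nf
      _ ≤ |Vb y₀| + |Vb y - Vb y₀| := abs_add_le _ _
      _ ≤ |Vb y₀| + K := by linarith [hVbLip y y₀]
  set Cb := |Vb y₀| + K with hCbdef
  have hCb0 : 0 ≤ Cb := le_trans (abs_nonneg _) (hCb y₀)
  have hVbmeas : Measurable Vb := measurable_of_countable Vb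
  have hrbmeas : Measurable rb := measurable_of_countable rb
  have hwmeas : Measurable fun q : Sb × Sb => ((Pb q.1) q.2).toReal := measurable_of_countable _
  -- the |Δ| function
  set Δ : S → ℝ := fun s => |V s - Vb (φ s)| with hΔdef
  have hΔmeas : Measurable Δ := (hVmeas.sub (hVbmeas.comp hφ)).abs
  have hΔ0 : ∀ s, 0 ≤ Δ s := fun s => abs_nonneg _
  have hΔC : ∀ s, Δ s ≤ C + Cb := by
    intro s
    calc Δ s ≤ |V s| + |Vb (φ s)| := by
          show |V s - Vb (φ s)| ≤ _
          rw [sub_eq_add_neg]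
          exact (abs_add_le _ _).trans (by rw [abs_neg])
      _ ≤ C + Cb := add_le_add (hC s) (hCb (φ s))
  have hΔint : Integrable Δ ξ := bdd_integrable _ hΔmeas (C + Cb)
    (fun s => by rw [abs_of_nonneg (hΔ0 s)]; exact hΔC s)
  -- reward loss function
  set fR : S → ℝ := fun s => |r s - rb (φ s)| with hfRdef
  have hfRmeas : Measurable fR := (hrmeas.sub (hrbmeas.comp hφ)).abs
  -- transition loss inner integral function
  set fT : S × S → ℝ := fun q => 1 - ((Pb (φ q.1)) (φ q.2)).toReal with hfTdef
  have hfTmeas : Measurable fT :=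
    measurable_const.sub (hwmeas.comp ((hφ.comp measurable_fst).prodMk (hφ.comp measurable_snd)))
  have hfT0 : ∀ q, 0 ≤ fT q := by
    intro q
    have h := PMF.coe_le_one (Pb (φ q.1)) (φ q.2)
    have h2 : ((Pb (φ q.1)) (φ q.2)).toReal ≤ 1 := by
      calc ((Pb (φ q.1)) (φ q.2)).toReal ≤ (1 : ENNReal).toReal :=
          ENNReal.toReal_mono ENNReal.one_ne_top h
        _ = 1 := by simp
    simp only [hfTdef]
    linarith
  have hfT1 : ∀ q, fT q ≤ 1 := by
    intro q
    have : 0 ≤ ((Pb (φ q.1)) (φ q.2)).toReal := ENNReal.toReal_nonneg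
    simp only [hfTdef]
    linarith
  set LPfn : S → ℝ := fun s => ∫ s', fT (s, s') ∂(P s) with hLPfndef
  have hLPmeas : Measurable LPfn := by
    have h : StronglyMeasurable (Function.uncurry fun s s' => fT (s, s')) := by
      apply Measurable.stronglyMeasurable
      exact hfTmeas.comp (measurable_fst.prodMk measurable_snd)
    exact (h.integral_kernel_prod_right (κ := P)).measurable
  have hLP0 : ∀ s, 0 ≤ LPfn s := fun s => integral_nonneg (fun s' => hfT0 _)
  have hLP1 : ∀ s, LPfn s ≤ 1 := by
    intro s
    calc LPfn s ≤ ∫ _s', (1:ℝ) ∂(P s) := by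
          refine integral_mono ?_ (integrable_const 1) (fun s' => hfT1 _)
          exact bdd_integrable _ (hfTmeas.comp (measurable_const.prodMk measurable_id)) 1
            (fun s' => by rw [abs_of_nonneg (hfT0 _)]; exact hfT1 _)
      _ = 1 := by simp
  have hLPint : Integrable LPfn ξ := bdd_integrable _ hLPmeas 1
    (fun s => by rw [abs_of_nonneg (hLP0 s)]; exact hLP1 s)
  set ΔPfn : S → ℝ := fun s => ∫ s', Δ s' ∂(P s) with hΔPfndef
  have hΔPmeas : Measurable ΔPfn := by
    have h : StronglyMeasurable (Function.uncurry fun (_s : S) s' => Δ s') := by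
      apply Measurable.stronglyMeasurable
      exact hΔmeas.comp measurable_snd
    exact (h.integral_kernel_prod_right (κ := P)).measurable
  have hΔP0 : ∀ s, 0 ≤ ΔPfn s := fun s => integral_nonneg (fun s' => hΔ0 _)
  have hΔPC : ∀ s, ΔPfn s ≤ C + Cb := by
    intro s
    calc ΔPfn s ≤ ∫ _s', (C + Cb) ∂(P s) := by
          refine integral_mono ?_ (integrable_const _) (fun s' => hΔC _)
          exact bdd_integrable _ hΔmeas (C + Cb)
            (fun s' => by rw [abs_of_nonneg (hΔ0 _)]; exact hΔC _)
      _ = C + Cb := by simp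
  have hΔPint : Integrable ΔPfn ξ := bdd_integrable _ hΔPmeas (C + Cb)
    (fun s => by rw [abs_of_nonneg (hΔP0 s)]; exact hΔPC s)
  have hfR1 : ∀ s, fR s ≤ 1 := by
    intro s
    calc fR s ≤ |r s| + |rb (φ s)| := by
          show |r s - rb (φ s)| ≤ _
          rw [sub_eq_add_neg]
          exact (abs_add_le _ _).trans (by rw [abs_neg])
      _ ≤ 1 := by linarith [hrbdd s, hrbbdd (φ s)]
  have hfR0 : ∀ s, 0 ≤ fR s := fun s => abs_nonneg _
  have hfRint : Integrable fR ξ := bdd_integrable _ hfRmeas 1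
    (fun s => by rw [abs_of_nonneg (hfR0 s)]; exact hfR1 s)
  -- integrate the pointwise bound
  have hI1 : Integrable (fun s => γ * K * LPfn s) ξ := hLPint.const_mul _
  have hI2 : Integrable (fun s => fR s + γ * K * LPfn s) ξ := hfRint.add hI1
  have hI3 : Integrable (fun s => γ * ΔPfn s) ξ := hΔPint.const_mul _
  have hRHSint : Integrable (fun s => fR s + γ * K * LPfn s + γ * ΔPfn s) ξ := hI2.add hI3
  have hkey : ∫ s, Δ s ∂ξ ≤ ∫ s, (fR s + γ * K * LPfn s + γ * ΔPfn s) ∂ξ := by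
    refine integral_mono hΔint hRHSint (fun s => ?_)
    exact pointwise_bound P Pb φ hφ γ K hγ0 hK r rb V hVmeas C hC hVbellman Vb
      hVbbellman hVbLip s
  have hsplit : ∫ s, (fR s + γ * K * LPfn s + γ * ΔPfn s) ∂ξ
      = ∫ s, fR s ∂ξ + γ * K * ∫ s, LPfn s ∂ξ + γ * ∫ s, ΔPfn s ∂ξ := by
    rw [integral_add hI2 hI3, integral_add hfRint hI1, integral_const_mul, integral_const_mul]
  have hinvar : ∫ s, ΔPfn s ∂ξ = ∫ s, Δ s ∂ξ :=
    invariant_integral P ξ hinv hΔmeas hΔ0 (C + Cb) hΔC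
  -- the compProd integral equals L_R + γK L_P
  have hfTints : ∀ s, Integrable (fun s' => fT (s, s')) (P s) := fun s =>
    bdd_integrable _ (hfTmeas.comp (measurable_const.prodMk measurable_id)) 1
      (fun s' => by rw [abs_of_nonneg (hfT0 _)]; exact hfT1 _)
  have hfint : Integrable (fun q => fR q.1 + γ * K * fT q) (ξ.compProd P) := by
    refine bdd_integrable _ ?_ (1 + γ * K) (fun q => ?_)
    · exact (hfRmeas.comp measurable_fst).add (hfTmeas.const_mul _)
    · have h1 := hfR0 q.1; have h2 := hfR1 q.1; have h3 := hfT0 q; have h4 := hfT1 q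
      have hγK : 0 ≤ γ * K := mul_nonneg hγ0 hK
      have h5 : 0 ≤ γ * K * fT q := mul_nonneg hγK h3
      have h6 : γ * K * fT q ≤ γ * K * 1 := mul_le_mul_of_nonneg_left h4 hγK
      rw [abs_of_nonneg (by linarith)]
      linarith
  have hcomp : ∫ q, (fR q.1 + γ * K * fT q) ∂(ξ.compProd P)
      = ∫ s, fR s ∂ξ + γ * K * ∫ s, LPfn s ∂ξ := by
    rw [Measure.integral_compProd hfint]
    have hinner : ∀ s, ∫ s', (fR s + γ * K * fT (s, s')) ∂(P s)
        = fR s + γ * K * LPfn s := by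
      intro s
      have hJ : Integrable (fun s' => γ * K * fT (s, s')) (P s) := (hfTints s).const_mul _
      rw [integral_add (integrable_const _) hJ, integral_const, integral_const_mul]
      simp [measure_univ, hLPfndef]
    rw [integral_congr_ae (ae_of_all _ hinner), integral_add hfRint hI1, integral_const_mul]
  have hfinal : (∫ s, Δ s ∂ξ) * (1 - γ) ≤ ∫ q, (fR q.1 + γ * K * fT q) ∂(ξ.compProd P) := by
    rw [hcomp]
    have := hkey
    rw [hsplit, hinvar] at this
    nlinarith [this]
  exact hfinal

end PACValueDifferenceAux

/-- PAC value-difference theorem for discounted return: with probability at least `1-δ` over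
`T ≥ ⌈-log(δ/4)·(1+γK)²/(2ε²(1-γ)²)⌉` i.i.d. sample pairs drawn from `ξ ⊗ P`, the expected
value difference between the ground and latent discounted-return values is bounded by
`(L̂_R + γ·K·L̂_P)/(1-γ) + ε`, where `L̂_R` and `L̂_P` are the empirical reward and transition
losses. -/
theorem pac_value_difference_return
    {S : Type*} [MeasurableSpace S]
    {Sb : Type*} [Fintype Sb] [Nonempty Sb] [MeasurableSpace Sb] [DiscreteMeasurableSpace Sb]
    (P : Kernel S S) [IsMarkovKernel P]
    (Pb : Sb → PMF Sb)
    (φ : S → Sb) (hφ : Measurable φ)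
    (ξ : Measure S) [IsProbabilityMeasure ξ]
    (hinv : ∀ A : Set S, MeasurableSet A → ξ A = ∫⁻ s, P s A ∂ξ)
    (γ : ℝ) (hγ0 : 0 ≤ γ) (hγ1 : γ < 1)
    (r : S → ℝ) (hrmeas : Measurable r) (hrbdd : ∀ s, |r s| ≤ 1 / 2)
    (rb : Sb → ℝ) (hrbbdd : ∀ x, |rb x| ≤ 1 / 2)
    (V : S → ℝ) (hVmeas : Measurable V) (hVbdd : ∃ C, ∀ s, |V s| ≤ C)
    (hVbellman : ∀ s, V s = r s + γ * ∫ s', V s' ∂(P s))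
    (Vb : Sb → ℝ)
    (hVbbellman : ∀ x, Vb x = rb x + γ * ∑ y, ((Pb x) y).toReal * Vb y)
    (K : ℝ) (hK : 0 ≤ K) (hVbLip : ∀ x y, |Vb x - Vb y| ≤ K)
    (ε δ : ℝ) (hε : ε ∈ Set.Ioo (0 : ℝ) 1) (hδ : δ ∈ Set.Ioo (0 : ℝ) 1)
    {Ω : Type*} [MeasurableSpace Ω] (Pr : Measure Ω) [IsProbabilityMeasure Pr]
    (T : ℕ) (Z : Fin T → Ω → S × S)
    (hZmeas : ∀ t, Measurable (Z t))
    (hZindep : iIndepFun Z Pr)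
    (hZlaw : ∀ t, Pr.map (Z t) = ξ.compProd P)
    (hT : ⌈-Real.log (δ / 4) * (1 + γ * K) ^ 2 / (2 * ε ^ 2 * (1 - γ) ^ 2)⌉₊ ≤ T) :
    ENNReal.ofReal (1 - δ) ≤
      Pr {ω | ∫ s, |V s - Vb (φ s)| ∂ξ ≤
        (((1 / (T : ℝ)) * ∑ t, |r (Z t ω).1 - rb (φ (Z t ω).1)|) +
          γ * K * ((1 / (T : ℝ)) *
            ∑ t, (1 - ((Pb (φ (Z t ω).1)) (φ (Z t ω).2)).toReal))) / (1 - γ) + ε} := by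
  classical
  obtain ⟨hε0, hε1⟩ := hε
  obtain ⟨hδ0, hδ1⟩ := hδ
  obtain ⟨C, hC⟩ := hVbdd
  have h1γ : (0:ℝ) < 1 - γ := by linarith
  set b₀ : ℝ := 1 + γ * K with hb₀def
  have hγK : 0 ≤ γ * K := mul_nonneg hγ0 hK
  have hb₀ : (0:ℝ) < b₀ := by rw [hb₀def]; linarith
  set ε' : ℝ := ε * (1 - γ) with hε'def
  have hε'0 : 0 < ε' := mul_pos hε0 h1γ
  -- T is positive
  have hTpos : 0 < T := by
    have hlog : Real.log (δ / 4) < 0 := Real.log_neg (by linarith) (by linarith)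
    have hx : 0 < -Real.log (δ / 4) * (1 + γ * K) ^ 2 / (2 * ε ^ 2 * (1 - γ) ^ 2) := by
      apply div_pos
      · apply mul_pos (by linarith)
        positivity
      · positivity
    exact lt_of_lt_of_le (Nat.ceil_pos.mpr hx) hT
  have hTR : (0:ℝ) < (T:ℝ) := by exact_mod_cast hTpos
  -- the loss function
  set f : S × S → ℝ :=
    fun q => |r q.1 - rb (φ q.1)| + γ * K * (1 - ((Pb (φ q.1)) (φ q.2)).toReal) with hfdef
  have hrbmeas : Measurable rb := measurable_of_countable rb
  have hwmeas : Measurable fun q : Sb × Sb => ((Pb q.1) q.2).toReal := measurable_of_countable _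
  have hfmeas : Measurable f := by
    apply Measurable.add
    · exact ((hrmeas.comp measurable_fst).sub (hrbmeas.comp (hφ.comp measurable_fst))).abs
    · exact (measurable_const.sub
        (hwmeas.comp ((hφ.comp measurable_fst).prodMk (hφ.comp measurable_snd)))).const_mul _
  have hνle : ∀ q : S × S, ((Pb (φ q.1)) (φ q.2)).toReal ≤ 1 := by
    intro q
    calc ((Pb (φ q.1)) (φ q.2)).toReal ≤ (1 : ENNReal).toReal :=
        ENNReal.toReal_mono ENNReal.one_ne_top (PMF.coe_le_one _ _)
      _ = 1 := by simp
  have hν0 : ∀ q : S × S, (0:ℝ) ≤ ((Pb (φ q.1)) (φ q.2)).toReal := fun q => ENNReal.toReal_nonneg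
  have hf0 : ∀ q, 0 ≤ f q := by
    intro q
    have h3 := hνle q; have h4 := hν0 q
    have : 0 ≤ γ * K * (1 - ((Pb (φ q.1)) (φ q.2)).toReal) := mul_nonneg hγK (by linarith)
    have := abs_nonneg (r q.1 - rb (φ q.1))
    simp only [hfdef]
    linarith
  have hfb : ∀ q, f q ≤ b₀ := by
    intro q
    have h3 := hνle q; have h4 := hν0 q
    have h5 : |r q.1 - rb (φ q.1)| ≤ 1 := by
      rw [sub_eq_add_neg]
      refine ((abs_add_le _ _).trans ?_)
      rw [abs_neg]
      linarith [hrbdd q.1, hrbbdd (φ q.1)]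
    have h6 : γ * K * (1 - ((Pb (φ q.1)) (φ q.2)).toReal) ≤ γ * K * 1 :=
      mul_le_mul_of_nonneg_left (by linarith) hγK
    simp only [hfdef, hb₀def]
    linarith
  -- mean loss
  set m : ℝ := ∫ q, f q ∂(ξ.compProd P) with hmdef
  have hfintc : Integrable f (ξ.compProd P) := bdd_integrable _ hfmeas b₀
    (fun q => by rw [abs_of_nonneg (hf0 q)]; exact hfb q)
  have hm0 : 0 ≤ m := integral_nonneg hf0
  have hmb : m ≤ b₀ := by
    calc m ≤ ∫ _q, b₀ ∂(ξ.compProd P) := integral_mono hfintc (integrable_const _) hfb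
      _ = b₀ := by simp
  -- deterministic bound
  have hdet : (∫ s, |V s - Vb (φ s)| ∂ξ) * (1 - γ) ≤ m :=
    value_diff_bound P Pb φ hφ ξ hinv γ K hγ0 hK r hrmeas hrbdd rb hrbbdd V hVmeas C hC
      hVbellman Vb hVbbellman hVbLip
  -- random variables
  set G : S × S → ℝ := fun q => m - f q with hGdef
  have hGmeas : Measurable G := measurable_const.sub hfmeas
  set Y : Fin T → Ω → ℝ := fun t => G ∘ Z t with hYdef
  have hYmeas : ∀ t, Measurable (Y t) := fun t => hGmeas.comp (hZmeas t)
  have hYindep : iIndepFun Y Pr :=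
    hZindep.comp (fun _ => G) (fun _ => hGmeas)
  have hfZint : ∀ t, Integrable (fun ω => f (Z t ω)) Pr := fun t =>
    bdd_integrable _ (hfmeas.comp (hZmeas t)) b₀
      (fun ω => by rw [abs_of_nonneg (hf0 _)]; exact hfb _)
  have hEX : ∀ t, ∫ ω, f (Z t ω) ∂Pr = m := by
    intro t
    rw [hmdef, ← hZlaw t, integral_map (hZmeas t).aemeasurable hfmeas.aestronglyMeasurable]
  have hEY : ∀ t, ∫ ω, Y t ω ∂Pr = 0 := by
    intro t
    have : ∫ ω, Y t ω ∂Pr = ∫ ω, (m - f (Z t ω)) ∂Pr := rfl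
    rw [this, integral_sub (integrable_const m) (hfZint t), integral_const, hEX t]
    simp
  have hYlb : ∀ t ω, m - b₀ ≤ Y t ω := fun t ω => by
    have := hfb (Z t ω); simp only [hYdef, hGdef, Function.comp_apply]; linarith
  have hYub : ∀ t ω, Y t ω ≤ m := fun t ω => by
    have := hf0 (Z t ω); simp only [hYdef, hGdef, Function.comp_apply]; linarith
  set t₀ : ℝ := 4 * ε' / b₀ ^ 2 with ht₀def
  have ht₀ : 0 < t₀ := by positivity
  have hmgf_each : ∀ t, mgf (Y t) Pr t₀ ≤ Real.exp (t₀ ^ 2 * b₀ ^ 2 / 8) := by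
    intro t
    have h := hoeff_mgf Pr (Y t) (hYmeas t) (m - b₀) m (by linarith)
      (hYlb t) (hYub t) (hEY t) t₀
    have he : m - (m - b₀) = b₀ := by ring
    rwa [he] at h
  -- Chernoff bound
  have hSYmeas : Measurable fun ω => ∑ t, Y t ω :=
    Finset.measurable_sum _ (fun t _ => hYmeas t)
  have hYabs : ∀ t ω, |Y t ω| ≤ b₀ := by
    intro t ω
    rw [abs_le]
    exact ⟨by linarith [hYlb t ω, hm0], by linarith [hYub t ω, hmb]⟩
  have hIntExp : Integrable (fun ω => Real.exp (t₀ * (∑ t, Y t) ω)) Pr := by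
    refine bdd_integrable _ ?_ (Real.exp (t₀ * ((T:ℝ) * b₀))) (fun ω => ?_)
    · refine (Measurable.const_mul ?_ t₀).exp
      have : (∑ t, Y t) = fun ω => ∑ t, Y t ω := by
        ext ω; simp [Finset.sum_apply]
      rw [this]; exact hSYmeas
    · rw [abs_of_pos (Real.exp_pos _), Real.exp_le_exp]
      have hsb : (∑ t, Y t) ω ≤ (T:ℝ) * b₀ := by
        rw [Finset.sum_apply]
        calc ∑ t, Y t ω ≤ ∑ _t : Fin T, b₀ :=
            Finset.sum_le_sum (fun t _ => (le_abs_self _).trans (hYabs t ω))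
          _ = (T:ℝ) * b₀ := by simp [Finset.sum_const, Finset.card_univ, nsmul_eq_mul]
      exact mul_le_mul_of_nonneg_left hsb ht₀.le
  have hchern := measure_ge_le_exp_mul_mgf (μ := Pr) (X := ∑ t, Y t) (t := t₀)
    ((T:ℝ) * ε') ht₀.le hIntExp
  have hmgfsum : mgf (∑ t, Y t) Pr t₀ = ∏ t, mgf (Y t) Pr t₀ :=
    hYindep.mgf_sum hYmeas Finset.univ
  have hprod : ∏ t, mgf (Y t) Pr t₀ ≤ Real.exp (t₀ ^ 2 * b₀ ^ 2 / 8) ^ (T:ℕ) := by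
    calc ∏ t, mgf (Y t) Pr t₀ ≤ ∏ _t : Fin T, Real.exp (t₀ ^ 2 * b₀ ^ 2 / 8) :=
        Finset.prod_le_prod (fun t _ => mgf_nonneg) (fun t _ => hmgf_each t)
      _ = Real.exp (t₀ ^ 2 * b₀ ^ 2 / 8) ^ (T:ℕ) := by
          simp [Finset.prod_const, Finset.card_univ]
  -- numeric tail bound
  have hTreal : -Real.log (δ / 4) * b₀ ^ 2 / (2 * ε' ^ 2) ≤ (T:ℝ) := by
    have heq : -Real.log (δ / 4) * b₀ ^ 2 / (2 * ε' ^ 2)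
        = -Real.log (δ / 4) * (1 + γ * K) ^ 2 / (2 * ε ^ 2 * (1 - γ) ^ 2) := by
      rw [hε'def, hb₀def]; ring_nf
    rw [heq]
    exact (Nat.le_ceil _).trans (Nat.cast_le.2 hT)
  have htail : (Pr {ω | (T:ℝ) * ε' ≤ (∑ t, Y t) ω}).toReal ≤ δ / 4 := by
    have hexp : Real.exp (-t₀ * ((T:ℝ) * ε')) * Real.exp (t₀ ^ 2 * b₀ ^ 2 / 8) ^ (T:ℕ)
        = Real.exp (-(2 * (T:ℝ) * ε' ^ 2 / b₀ ^ 2)) := by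
      rw [← Real.exp_nat_mul, ← Real.exp_add]
      congr 1
      rw [ht₀def]
      field_simp
      ring
    have hlogb : -(2 * (T:ℝ) * ε' ^ 2 / b₀ ^ 2) ≤ Real.log (δ / 4) := by
      have h2 : -Real.log (δ / 4) * b₀ ^ 2 ≤ (T:ℝ) * (2 * ε' ^ 2) := by
        rw [div_le_iff₀ (by positivity)] at hTreal
        linarith
      rw [neg_le, le_div_iff₀ (by positivity : (0:ℝ) < b₀ ^ 2)]
      nlinarith
    calc (Pr {ω | (T:ℝ) * ε' ≤ (∑ t, Y t) ω}).toReal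
        ≤ Real.exp (-t₀ * ((T:ℝ) * ε')) * mgf (∑ t, Y t) Pr t₀ := hchern
      _ ≤ Real.exp (-t₀ * ((T:ℝ) * ε')) * (Real.exp (t₀ ^ 2 * b₀ ^ 2 / 8) ^ (T:ℕ)) := by
          rw [hmgfsum]
          exact mul_le_mul_of_nonneg_left hprod (Real.exp_pos _).le
      _ = Real.exp (-(2 * (T:ℝ) * ε' ^ 2 / b₀ ^ 2)) := hexp
      _ ≤ Real.exp (Real.log (δ / 4)) := Real.exp_le_exp.2 hlogb
      _ = δ / 4 := Real.exp_log (by linarith)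
  -- event inclusion
  set A : Set Ω := {ω | (T:ℝ) * ε' ≤ (∑ t, Y t) ω} with hAdef
  have hAmeas : MeasurableSet A := by
    have : A = (fun ω => (∑ t, Y t) ω) ⁻¹' Set.Ici ((T:ℝ) * ε') := by
      ext ω; simp [hAdef]
    rw [this]
    have hmeas : Measurable fun ω => (∑ t, Y t) ω := by
      have : (fun ω => (∑ t, Y t) ω) = fun ω => ∑ t, Y t ω := by
        ext ω; simp [Finset.sum_apply]
      rw [this]; exact hSYmeas
    exact hmeas measurableSet_Ici
  have hsub : Aᶜ ⊆ {ω | ∫ s, |V s - Vb (φ s)| ∂ξ ≤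
        (((1 / (T : ℝ)) * ∑ t, |r (Z t ω).1 - rb (φ (Z t ω).1)|) +
          γ * K * ((1 / (T : ℝ)) *
            ∑ t, (1 - ((Pb (φ (Z t ω).1)) (φ (Z t ω).2)).toReal))) / (1 - γ) + ε} := by
    intro ω hω
    simp only [hAdef, Set.mem_compl_iff, Set.mem_setOf_eq, not_le] at hω
    -- hω : (∑ t, Y t) ω < T * ε'
    have hsum : (∑ t, Y t) ω = (T:ℝ) * m - ∑ t, f (Z t ω) := by
      rw [Finset.sum_apply]
      have : ∀ t : Fin T, Y t ω = m - f (Z t ω) := fun t => rfl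
      rw [Finset.sum_congr rfl (fun t _ => this t), Finset.sum_sub_distrib,
        Finset.sum_const, Finset.card_univ]
      simp [nsmul_eq_mul]
    rw [hsum] at hω
    have hmlt : m ≤ (1 / (T:ℝ)) * ∑ t, f (Z t ω) + ε' := by
      rw [← sub_le_iff_le_add, one_div, inv_mul_eq_div, le_div_iff₀ hTR]
      linarith [hω]
    have hsplitf : (1 / (T:ℝ)) * ∑ t, f (Z t ω)
        = ((1 / (T : ℝ)) * ∑ t, |r (Z t ω).1 - rb (φ (Z t ω).1)|) +
          γ * K * ((1 / (T : ℝ)) *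
            ∑ t, (1 - ((Pb (φ (Z t ω).1)) (φ (Z t ω).2)).toReal)) := by
      have : ∑ t, f (Z t ω) = ∑ t, (|r (Z t ω).1 - rb (φ (Z t ω).1)|
          + γ * K * (1 - ((Pb (φ (Z t ω).1)) (φ (Z t ω).2)).toReal)) := rfl
      rw [this, Finset.sum_add_distrib, ← Finset.mul_sum]
      ring
    simp only [Set.mem_setOf_eq]
    have hD := hdet
    have hDle : ∫ s, |V s - Vb (φ s)| ∂ξ ≤ ((1 / (T:ℝ)) * ∑ t, f (Z t ω) + ε') / (1 - γ) := by
      rw [le_div_iff₀ h1γ]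
      calc (∫ s, |V s - Vb (φ s)| ∂ξ) * (1 - γ) ≤ m := hD
        _ ≤ (1 / (T:ℝ)) * ∑ t, f (Z t ω) + ε' := hmlt
    calc ∫ s, |V s - Vb (φ s)| ∂ξ ≤ ((1 / (T:ℝ)) * ∑ t, f (Z t ω) + ε') / (1 - γ) := hDle
      _ = ((1 / (T:ℝ)) * ∑ t, f (Z t ω)) / (1 - γ) + ε := by
          rw [add_div, hε'def]
          congr 1
          field_simp
      _ = _ := by rw [hsplitf]
  -- conclude
  have hPrA : Pr A ≤ ENNReal.ofReal (δ / 4) := by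
    rw [← ENNReal.ofReal_toReal (measure_ne_top Pr A)]
    exact ENNReal.ofReal_le_ofReal htail
  have hcompl : ENNReal.ofReal (1 - δ) ≤ Pr Aᶜ := by
    rw [measure_compl hAmeas (measure_ne_top Pr A), measure_univ]
    calc ENNReal.ofReal (1 - δ) ≤ 1 - ENNReal.ofReal (δ / 4) := by
          rw [← ENNReal.ofReal_one, ← ENNReal.ofReal_sub _ (by linarith : (0:ℝ) ≤ δ / 4)]
          exact ENNReal.ofReal_le_ofReal (by linarith)
      _ ≤ 1 - Pr A := tsub_le_tsub le_rfl hPrA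
  exact hcompl.trans (measure_mono hsub)
end
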